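/- arXiv:1911.10302 — 7 statements merged into one kernel-verified Lean document; each statement's English description precedes it below -/
import Mathlib

section
/- Let K be a Killing field on ℝ³ and let (u,p) be a smooth solution of the incompressible Euler equations on I × ℝ³. Then the swirl σ(t,x) = ⟨u(t,x), K(x)⟩ satisfies the equation ∂ₜσ + ⟨u, ∇ₓσ⟩ = −⟨∇ₓp, K⟩ on I × ℝ³. -/
noncomputable section

/-- Vectors in ℝ³. -/
abbrev V3 : Type := Fin 3 → ℝ

/-- Euclidean inner product on ℝ³. -/
def dot3 (u v : V3) : ℝ := ∑ i, u i * v i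

/-- Cross product on ℝ³. -/
def cross3 (u v : V3) : V3 :=
  ![u 1 * v 2 - u 2 * v 1, u 2 * v 0 - u 0 * v 2, u 0 * v 1 - u 1 * v 0]

/-- Partial derivative ∂ᵢ of a scalar function. -/
def pd (i : Fin 3) (f : V3 → ℝ) (x : V3) : ℝ := fderiv ℝ f x (Pi.single i 1)

/-- Gradient of a scalar function. -/
def grad3 (f : V3 → ℝ) (x : V3) : V3 := fun i => pd i f x

/-- Divergence of a vector field. -/
def div3 (X : V3 → V3) (x : V3) : ℝ := ∑ i, fderiv ℝ X x (Pi.single i 1) i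

/-- Curl of a vector field. -/
def curl3 (X : V3 → V3) (x : V3) : V3 :=
  ![pd 1 (fun y => X y 2) x - pd 2 (fun y => X y 1) x,
    pd 2 (fun y => X y 0) x - pd 0 (fun y => X y 2) x,
    pd 0 (fun y => X y 1) x - pd 1 (fun y => X y 0) x]

/-- Lie bracket of vector fields: [X,Y](x) = DY(x)X(x) − DX(x)Y(x). -/
def bracket3 (X Y : V3 → V3) (x : V3) : V3 := fderiv ℝ Y x (X x) - fderiv ℝ X x (Y x)

/-- `K` is a Killing field of the Euclidean metric on `U`: `DK(x)` is antisymmetric on `U`. -/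
def IsKillingOn (K : V3 → V3) (U : Set V3) : Prop :=
  ∀ x ∈ U, ∀ v w : V3, dot3 (fderiv ℝ K x v) w + dot3 v (fderiv ℝ K x w) = 0

/-- `(u,p)` solves the incompressible Euler equations on `I × ℝ³`:
∂ₜu + (Dₓu)u = −∇ₓp and divₓ u = 0. -/
def IsEulerSolution (I : Set ℝ) (u : ℝ → V3 → V3) (p : ℝ → V3 → ℝ) : Prop :=
  (∀ t ∈ I, ∀ x : V3, deriv (fun s => u s x) t + fderiv ℝ (u t) x (u t x)
      = -grad3 (p t) x) ∧
  (∀ t ∈ I, ∀ x : V3, div3 (u t) x = 0)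

/-- for a Killing field K and a smooth Euler solution (u,p), the swirl
σ(t,x) = ⟨u(t,x), K(x)⟩ satisfies ∂ₜσ + ⟨u, ∇ₓσ⟩ = −⟨∇ₓp, K⟩. -/
theorem swirl_transport_equation (I : Set ℝ) (hIopen : IsOpen I) (hI0 : (0:ℝ) ∈ I)
    (hIconn : I.OrdConnected)
    (K : V3 → V3) (hKsmooth : ContDiff ℝ (⊤ : ℕ∞) K)
    (hKill : IsKillingOn K Set.univ)
    (u : ℝ → V3 → V3) (p : ℝ → V3 → ℝ)
    (hu : ContDiffOn ℝ (⊤ : ℕ∞) (fun q : ℝ × V3 => u q.1 q.2) (I ×ˢ (Set.univ : Set V3)))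
    (hp : ContDiffOn ℝ (⊤ : ℕ∞) (fun q : ℝ × V3 => p q.1 q.2) (I ×ˢ (Set.univ : Set V3)))
    (heuler : IsEulerSolution I u p) :
    ∀ t ∈ I, ∀ x : V3,
      deriv (fun s => dot3 (u s x) (K x)) t
        + dot3 (u t x) (grad3 (fun y => dot3 (u t y) (K y)) x)
      = - dot3 (grad3 (p t) x) (K x) := by
  intro t ht x
  have hopen : IsOpen (I ×ˢ (Set.univ : Set V3)) := hIopen.prod isOpen_univ
  have hmem : (t, x) ∈ I ×ˢ (Set.univ : Set V3) := ⟨ht, trivial⟩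
  have hu' : ContDiffAt ℝ (⊤ : ℕ∞) (fun q : ℝ × V3 => u q.1 q.2) (t, x) :=
    hu.contDiffAt (hopen.mem_nhds hmem)
  have hut : DifferentiableAt ℝ (fun s => u s x) t := by
    have h : ContDiffAt ℝ (⊤ : ℕ∞) (fun s : ℝ => u s x) t :=
      hu'.comp t (contDiffAt_id.prodMk contDiffAt_const)
    exact h.differentiableAt (by simp)
  have hux : DifferentiableAt ℝ (u t) x := by
    have h : ContDiffAt ℝ (⊤ : ℕ∞) (fun y : V3 => u t y) x :=
      hu'.comp x (contDiffAt_const.prodMk contDiffAt_id)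
    exact h.differentiableAt (by simp)
  have hKd : DifferentiableAt ℝ K x := (hKsmooth.differentiable (by simp)) x
  set d := deriv (fun s => u s x) t with hd
  set A := fderiv ℝ (u t) x with hA
  set B := fderiv ℝ K x with hB
  have hdd : HasDerivAt (fun s => u s x) d t := hut.hasDerivAt
  have hAA : HasFDerivAt (u t) A x := hux.hasFDerivAt
  have hBB : HasFDerivAt K B x := hKd.hasFDerivAt
  -- time derivative of the swirl
  have hderiv : deriv (fun s => dot3 (u s x) (K x)) t = dot3 d (K x) := by
    have h : HasDerivAt (fun s => dot3 (u s x) (K x)) (∑ i, d i * K x i) t := by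
      simp only [dot3]
      refine HasDerivAt.fun_sum fun i _ => ?_
      have hi : HasDerivAt (fun s => u s x i) (d i) t :=
        ((ContinuousLinearMap.proj i : V3 →L[ℝ] ℝ).hasFDerivAt.comp_hasDerivAt t hdd)
      exact hi.mul_const _
    rw [h.deriv]; rfl
  -- spatial derivative of the swirl
  have hprod : HasFDerivAt (fun y => dot3 (u t y) (K y))
      (∑ j, (u t x j • ((ContinuousLinearMap.proj j : V3 →L[ℝ] ℝ).comp B)
            + K x j • ((ContinuousLinearMap.proj j : V3 →L[ℝ] ℝ).comp A))) x := by
    simp only [dot3]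
    refine HasFDerivAt.fun_sum fun j _ => ?_
    have h1 : HasFDerivAt (fun y => u t y j)
        ((ContinuousLinearMap.proj j : V3 →L[ℝ] ℝ).comp A) x :=
      (ContinuousLinearMap.proj j : V3 →L[ℝ] ℝ).hasFDerivAt.comp x hAA
    have h2 : HasFDerivAt (fun y => K y j)
        ((ContinuousLinearMap.proj j : V3 →L[ℝ] ℝ).comp B) x :=
      (ContinuousLinearMap.proj j : V3 →L[ℝ] ℝ).hasFDerivAt.comp x hBB
    exact h1.mul h2
  have hgrad : ∀ i, grad3 (fun y => dot3 (u t y) (K y)) x i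
      = ∑ j, (u t x j * B (Pi.single i 1) j + K x j * A (Pi.single i 1) j) := by
    intro i
    show pd i (fun y => dot3 (u t y) (K y)) x = _
    rw [pd, hprod.fderiv]
    simp [ContinuousLinearMap.sum_apply]
  -- decomposition of a vector into the standard basis
  have hbasis : ∀ (T : V3 →L[ℝ] V3) (v : V3) (j : Fin 3),
      T v j = ∑ i, v i * T (Pi.single i 1) j := by
    intro T v j
    have hv : v = ∑ i, v i • (Pi.single i 1 : V3) := by
      funext k
      simp [Finset.sum_apply, Pi.single_apply, Finset.sum_ite_eq]
    conv_lhs => rw [hv]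
    rw [map_sum]
    simp [Finset.sum_apply]
  have hdot : dot3 (u t x) (grad3 (fun y => dot3 (u t y) (K y)) x)
      = dot3 (A (u t x)) (K x) + dot3 (u t x) (B (u t x)) := by
    rw [funext hgrad]
    simp only [dot3, hbasis A (u t x), hbasis B (u t x)]
    simp only [Fin.sum_univ_three]
    ring
  -- Killing field: quadratic form vanishes
  have hkill0 : dot3 (u t x) (B (u t x)) = 0 := by
    have h := hKill x (Set.mem_univ x) (u t x) (u t x)
    rw [← hB] at h
    have hsym : dot3 (B (u t x)) (u t x) = dot3 (u t x) (B (u t x)) := by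
      simp [dot3, mul_comm]
    linarith
  -- Euler equation
  obtain ⟨he1, _⟩ := heuler
  have heq : d + A (u t x) = -grad3 (p t) x := he1 t ht x
  have hAval : A (u t x) = -grad3 (p t) x - d := by
    rw [← heq]; abel
  rw [hderiv, hdot, hkill0, hAval]
  simp [dot3, sub_mul, neg_mul, Finset.sum_sub_distrib, Finset.sum_add_distrib]
end
end

section
/- Let K be a Killing field on ℝ³ and let (u,p) be a smooth solution of the incompressible Euler equations on I × ℝ³ such that u is axisymmetric: [K, u(t,·)] = 0 for every t ∈ I. Then for every t ∈ I the function x ↦ ⟨∇ₓp(t,x), K(x)⟩ is constant on ℝ³. -/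
noncomputable section

/- ### Auxiliary lemmas -/

lemma EulerAux.top_add_one : ((⊤:ℕ∞) : WithTop ℕ∞) + 1 ≤ ((⊤:ℕ∞) : WithTop ℕ∞) := by norm_num

lemma EulerAux.one_le_top : (1 : WithTop ℕ∞) ≤ ((⊤:ℕ∞) : WithTop ℕ∞) := by
  have : ((1:ℕ∞) : WithTop ℕ∞) ≤ ((⊤:ℕ∞) : WithTop ℕ∞) := WithTop.coe_le_coe.2 le_top
  simpa using this

lemma EulerAux.two_le_top : (2 : WithTop ℕ∞) ≤ ((⊤:ℕ∞) : WithTop ℕ∞) := by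
  have : ((2:ℕ∞) : WithTop ℕ∞) ≤ ((⊤:ℕ∞) : WithTop ℕ∞) := WithTop.coe_le_coe.2 le_top
  simpa using this

lemma dot3_comm (u v : V3) : dot3 u v = dot3 v u := by simp [dot3, mul_comm]

lemma dot3_single (a : V3) (j : Fin 3) : dot3 a (Pi.single j 1) = a j := by
  simp [dot3, Pi.single_apply]

/-- The inner product with a fixed vector, as a continuous linear map. -/
def dotCLM (a : V3) : V3 →L[ℝ] ℝ := ∑ i, a i • ContinuousLinearMap.proj i

lemma dotCLM_apply (a v : V3) : dotCLM a v = dot3 v a := by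
  simp [dotCLM, dot3, mul_comm]

lemma clm_eq_sum (L : V3 →L[ℝ] ℝ) (w : V3) : L w = ∑ i, w i * L (Pi.single i 1) := by
  conv_lhs => rw [← Finset.univ_sum_single w]
  rw [map_sum]
  refine Finset.sum_congr rfl fun i _ => ?_
  have h : Pi.single i (w i) = w i • (Pi.single i 1 : V3) := by
    ext j; by_cases hj : j = i <;> simp [hj, Pi.single_apply]
  rw [h, map_smul]; simp

/-- Product rule for `dot3`. -/
lemma hasFDerivAt_dot3 {f g : V3 → V3} {f' g' : V3 →L[ℝ] V3} {x : V3}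
    (hf : HasFDerivAt f f' x) (hg : HasFDerivAt g g' x) :
    HasFDerivAt (fun y => dot3 (f y) (g y))
      ((dotCLM (g x)).comp f' + (dotCLM (f x)).comp g') x := by
  have hcomp : ∀ i : Fin 3, HasFDerivAt (fun y => f y i * g y i)
      (f x i • ((ContinuousLinearMap.proj i (R := ℝ) (φ := fun _ : Fin 3 => ℝ)).comp g')
        + g x i • ((ContinuousLinearMap.proj i).comp f')) x := by
    intro i
    exact ((ContinuousLinearMap.proj (R := ℝ) (φ := fun _ : Fin 3 => ℝ) i).hasFDerivAt.comp x hf).mul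
      ((ContinuousLinearMap.proj (R := ℝ) (φ := fun _ : Fin 3 => ℝ) i).hasFDerivAt.comp x hg)
  have hsum := HasFDerivAt.sum (fun i (_ : i ∈ Finset.univ) => hcomp i)
  have heq : (fun y => dot3 (f y) (g y)) = fun y => ∑ i, f y i * g y i := by
    funext y; rfl
  rw [heq]
  refine HasFDerivAt.congr_fderiv (by simpa only [Finset.sum_fn] using hsum) (Eq.symm ?_)
  ext v
  simp only [ContinuousLinearMap.add_apply, ContinuousLinearMap.comp_apply,
    ContinuousLinearMap.sum_apply, ContinuousLinearMap.smul_apply,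
    ContinuousLinearMap.proj_apply, dotCLM_apply, dot3, smul_eq_mul]
  rw [Finset.sum_add_distrib, add_comm]
  congr 1
  · exact Finset.sum_congr rfl fun i _ => mul_comm _ _
  · exact Finset.sum_congr rfl fun i _ => mul_comm _ _

/-- A smooth Killing field on all of ℝ³ has constant derivative. -/
lemma killing_fderiv_const (K : V3 → V3) (hK : ContDiff ℝ (⊤:ℕ∞) K)
    (hKill : ∀ x, ∀ v w : V3, dot3 (fderiv ℝ K x v) w + dot3 v (fderiv ℝ K x w) = 0) :
    ∀ x : V3, fderiv ℝ K x = fderiv ℝ K 0 := by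
  set F := fderiv ℝ K with hF
  have hFc : ContDiff ℝ (⊤:ℕ∞) F := hK.fderiv_right EulerAux.top_add_one
  have hFd : Differentiable ℝ F := hFc.differentiable (by simp)
  have hKd : ∀ y, HasFDerivAt K (F y) y :=
    fun y => (hK.differentiable (by simp) y).hasFDerivAt
  have key : ∀ x, fderiv ℝ F x = 0 := by
    intro x
    have hsym : ∀ v w : V3, fderiv ℝ F x v w = fderiv ℝ F x w v :=
      fun v w => second_derivative_symmetric hKd (hFd x).hasFDerivAt v w
    have hanti : ∀ v w k : V3,
        dot3 (fderiv ℝ F x v w) k + dot3 w (fderiv ℝ F x v k) = 0 := by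
      intro v w k
      have h1 : HasFDerivAt (fun y => F y w) ((fderiv ℝ F x).flip w) x := by
        have := (hFd x).hasFDerivAt.clm_apply (hasFDerivAt_const w x)
        simpa using this
      have h1' : HasFDerivAt (fun y => F y k) ((fderiv ℝ F x).flip k) x := by
        have := (hFd x).hasFDerivAt.clm_apply (hasFDerivAt_const k x)
        simpa using this
      have e1 : HasFDerivAt (fun y => dot3 (F y w) k)
          ((dotCLM k).comp ((fderiv ℝ F x).flip w)) x := by
        have hfun : (fun y => dot3 (F y w) k) = fun y => dotCLM k (F y w) := by
          funext y; rw [dotCLM_apply]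
        rw [hfun]; exact (dotCLM k).hasFDerivAt.comp x h1
      have e2 : HasFDerivAt (fun y => dot3 w (F y k))
          ((dotCLM w).comp ((fderiv ℝ F x).flip k)) x := by
        have hfun : (fun y => dot3 w (F y k)) = fun y => dotCLM w (F y k) := by
          funext y; rw [dotCLM_apply, dot3_comm]
        rw [hfun]; exact (dotCLM w).hasFDerivAt.comp x h1'
      have h2 : HasFDerivAt (fun y => dot3 (F y w) k + dot3 w (F y k)) _ x := e1.add e2
      have hzero : (fun y => dot3 (F y w) k + dot3 w (F y k)) = fun _ => (0:ℝ) := by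
        funext y; exact hKill y w k
      rw [hzero] at h2
      have h3 := h2.unique (hasFDerivAt_const (0:ℝ) x)
      have := congrArg (fun (L : V3 →L[ℝ] ℝ) => L v) h3
      simpa [dotCLM_apply, dot3_comm] using this
    have hz : ∀ v w k : V3, dot3 (fderiv ℝ F x v w) k = 0 := by
      intro v w k
      have S1 : dot3 (fderiv ℝ F x v k) w = dot3 (fderiv ℝ F x k v) w := by rw [hsym]
      have S2 : dot3 (fderiv ℝ F x k w) v = dot3 (fderiv ℝ F x w k) v := by rw [hsym]
      have S3 : dot3 (fderiv ℝ F x w v) k = dot3 (fderiv ℝ F x v w) k := by rw [hsym]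
      have A1 := hanti v w k
      have A2 := hanti k v w
      have A3 := hanti w k v
      rw [dot3_comm w (fderiv ℝ F x v k)] at A1
      rw [dot3_comm v (fderiv ℝ F x k w)] at A2
      rw [dot3_comm k (fderiv ℝ F x w v)] at A3
      linarith
    ext v w j
    have := hz v w (Pi.single j 1)
    rw [dot3_single] at this
    simpa using this
  intro x
  exact is_const_of_fderiv_eq_zero hFd key x 0

/-- for a Killing field K and a smooth axisymmetric Euler solution (u,p)
(i.e. [K, u(t,·)] = 0), for each time t the function x ↦ ⟨∇ₓp(t,x), K(x)⟩ is constant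
on ℝ³. -/
theorem pressure_gradient_swirl_constant (I : Set ℝ) (hIopen : IsOpen I) (hI0 : (0:ℝ) ∈ I)
    (hIconn : I.OrdConnected)
    (K : V3 → V3) (hKsmooth : ContDiff ℝ (⊤ : ℕ∞) K)
    (hKill : IsKillingOn K Set.univ)
    (u : ℝ → V3 → V3) (p : ℝ → V3 → ℝ)
    (hu : ContDiffOn ℝ (⊤ : ℕ∞) (fun q : ℝ × V3 => u q.1 q.2) (I ×ˢ (Set.univ : Set V3)))
    (hp : ContDiffOn ℝ (⊤ : ℕ∞) (fun q : ℝ × V3 => p q.1 q.2) (I ×ˢ (Set.univ : Set V3)))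
    (heuler : IsEulerSolution I u p)
    (haxi : ∀ t ∈ I, ∀ x : V3, bracket3 K (u t) x = 0) :
    ∀ t ∈ I, ∀ x y : V3,
      dot3 (grad3 (p t) x) (K x) = dot3 (grad3 (p t) y) (K y) := by
  intro t ht x y
  -- The constant antisymmetric derivative of the Killing field
  set A := fderiv ℝ K 0 with hAdef
  have hA : ∀ z : V3, fderiv ℝ K z = A :=
    killing_fderiv_const K hKsmooth (fun z v w => hKill z trivial v w)
  have hAanti : ∀ v w : V3, dot3 (A v) w + dot3 v (A w) = 0 := fun v w => by
    have := hKill 0 trivial v w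
    rwa [hA 0] at this
  have hKd : ∀ z : V3, HasFDerivAt K A z := fun z =>
    hA z ▸ (hKsmooth.differentiable (by simp) z).hasFDerivAt
  -- Product-space setup
  set U : ℝ × V3 → V3 := fun q => u q.1 q.2 with hUdef
  set S : Set (ℝ × V3) := I ×ˢ (Set.univ : Set V3) with hSdef
  have hS : IsOpen S := hIopen.prod isOpen_univ
  have hmem : ∀ s ∈ I, ∀ z : V3, (s, z) ∈ S := fun s hs z => ⟨hs, trivial⟩
  have hslice : ∀ s ∈ I, ContDiff ℝ (⊤:ℕ∞) (u s) := by
    intro s hs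
    rw [← contDiffOn_univ]
    exact hu.comp (s := (Set.univ : Set V3))
      ((contDiff_const (c := s)).prodMk contDiff_id).contDiffOn
      (fun z _ => hmem s hs z)
  have hpt : ContDiff ℝ (⊤:ℕ∞) (p t) := by
    rw [← contDiffOn_univ]
    exact hp.comp (s := (Set.univ : Set V3))
      ((contDiff_const (c := t)).prodMk contDiff_id).contDiffOn
      (fun z _ => hmem t ht z)
  have hUdiff : ∀ q ∈ S, HasFDerivAt U (fderiv ℝ U q) q := fun q hq =>
    ((hu.differentiableOn (by simp)).differentiableAt (hS.mem_nhds hq)).hasFDerivAt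
  have hspace : ∀ s ∈ I, ∀ z : V3, HasFDerivAt (u s)
      ((fderiv ℝ U (s, z)).comp (ContinuousLinearMap.inr ℝ ℝ V3)) z := by
    intro s hs z
    exact (hUdiff (s, z) (hmem s hs z)).comp z (hasFDerivAt_prodMk_right s z)
  have hDut : ∀ s ∈ I, ∀ z v : V3, fderiv ℝ (u s) z v = fderiv ℝ U (s, z) (0, v) := by
    intro s hs z v
    rw [(hspace s hs z).fderiv]; rfl
  have htime : ∀ s ∈ I, ∀ z : V3,
      HasDerivAt (fun r => u r z) (fderiv ℝ U (s, z) (1, 0)) s := by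
    intro s hs z
    exact (hUdiff (s, z) (hmem s hs z)).comp_hasDerivAt s
      ((hasDerivAt_id s).prodMk (hasDerivAt_const s z))
  have hDU : ContDiffOn ℝ (⊤:ℕ∞) (fderiv ℝ U) S := hu.fderiv_of_isOpen hS EulerAux.top_add_one
  have hDUdiff : ∀ q ∈ S, HasFDerivAt (fderiv ℝ U) (fderiv ℝ (fderiv ℝ U) q) q := fun q hq =>
    ((hDU.differentiableOn (by simp)).differentiableAt (hS.mem_nhds hq)).hasFDerivAt
  -- the time slice at `t`
  set ut : V3 → V3 := u t with hutdef
  have hut : ContDiff ℝ (⊤:ℕ∞) ut := hslice t ht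
  have hutd : ∀ z : V3, HasFDerivAt ut (fderiv ℝ ut z) z := fun z =>
    (hut.differentiable (by simp) z).hasFDerivAt
  have hut2 : ∀ z : V3, HasFDerivAt (fderiv ℝ ut) (fderiv ℝ (fderiv ℝ ut) z) z := fun z =>
    (((hut.fderiv_right EulerAux.top_add_one).differentiable (by simp)) z).hasFDerivAt
  -- axisymmetry
  have haxiEq : ∀ s ∈ I, ∀ z : V3, fderiv ℝ (u s) z (K z) = A (u s z) := by
    intro s hs z
    have hb : fderiv ℝ (u s) z (K z) - fderiv ℝ K z (u s z) = 0 := haxi s hs z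
    have h2 := sub_eq_zero.mp hb
    rwa [hA z] at h2
  have haxiU : ∀ s ∈ I, ∀ z : V3, fderiv ℝ U (s, z) (0, K z) = A (u s z) := by
    intro s hs z
    rw [← hDut s hs z (K z)]
    exact haxiEq s hs z
  -- the time derivative field at time `t`
  set vt : V3 → V3 := fun z => fderiv ℝ U (t, z) (1, 0) with hvtdef
  have hvt_deriv : ∀ z : V3, deriv (fun r => u r z) t = vt z := fun z => (htime t ht z).deriv
  have hvtsmooth : ContDiff ℝ (⊤:ℕ∞) vt := by
    rw [← contDiffOn_univ]
    have h1 : ContDiffOn ℝ (⊤:ℕ∞) (fun q => fderiv ℝ U q ((1:ℝ), (0:V3))) S :=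
      hDU.clm_apply contDiffOn_const
    exact h1.comp (s := (Set.univ : Set V3))
      ((contDiff_const (c := t)).prodMk contDiff_id).contDiffOn
      (fun z _ => hmem t ht z)
  have hvtd : ∀ z : V3, HasFDerivAt vt (fderiv ℝ vt z) z := fun z =>
    (hvtsmooth.differentiable (by simp) z).hasFDerivAt
  -- main pointwise derivative computation
  have hf0 : ∀ z : V3, HasFDerivAt (fun w => dot3 (grad3 (p t) w) (K w)) (0 : V3 →L[ℝ] ℝ) z := by
    intro z
    set D2 := fderiv ℝ (fderiv ℝ U) (t, z) with hD2def
    have hsymU : ∀ a b : ℝ × V3, D2 a b = D2 b a := fun a b =>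
      ((hu.contDiffAt (hS.mem_nhds (hmem t ht z))).isSymmSndFDerivAt (by simpa [minSmoothness_of_isRCLikeNormedField] using EulerAux.two_le_top)).eq a b
    -- time-differentiated axisymmetry
    have hKt : D2 (1, 0) (0, K z) = A (vt z) := by
      have stepa : HasDerivAt (fun s : ℝ => fderiv ℝ U (s, z)) (D2 (1, 0)) t :=
        (hDUdiff (t, z) (hmem t ht z)).comp_hasDerivAt t
          ((hasDerivAt_id t).prodMk (hasDerivAt_const t z))
      have h1 : HasDerivAt (fun s : ℝ => fderiv ℝ U (s, z) (0, K z)) (D2 (1, 0) (0, K z)) t :=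
        (ContinuousLinearMap.apply ℝ V3 ((0:ℝ), K z)).hasFDerivAt.comp_hasDerivAt t stepa
      have h2 : HasDerivAt (fun s : ℝ => A (u s z)) (A (vt z)) t :=
        A.hasFDerivAt.comp_hasDerivAt t (htime t ht z)
      have heq : (fun s : ℝ => fderiv ℝ U (s, z) (0, K z)) =ᶠ[nhds t]
          fun s : ℝ => A (u s z) :=
        Filter.eventuallyEq_of_mem (hIopen.mem_nhds ht) (fun s hs => haxiU s hs z)
      have h3 : HasDerivAt (fun s : ℝ => fderiv ℝ U (s, z) (0, K z)) (A (vt z)) t :=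
        h2.congr_of_eventuallyEq heq
      exact h1.unique h3
    -- spatial derivative of vt along K
    have hvtK : fderiv ℝ vt z (K z) = A (vt z) := by
      have hvt' : HasFDerivAt vt
          ((ContinuousLinearMap.apply ℝ V3 ((1:ℝ), (0:V3))).comp
            (D2.comp (ContinuousLinearMap.inr ℝ ℝ V3))) z :=
        (ContinuousLinearMap.apply ℝ V3 ((1:ℝ), (0:V3))).hasFDerivAt.comp z
          ((hDUdiff (t, z) (hmem t ht z)).comp z (hasFDerivAt_prodMk_right t z))
      rw [hvt'.fderiv]
      show D2 (0, K z) (1, 0) = A (vt z)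
      rw [hsymU]
      exact hKt
    -- spatially differentiated axisymmetry
    have hKs : ∀ v : V3, fderiv ℝ (fderiv ℝ ut) z v (K z)
        = A (fderiv ℝ ut z v) - fderiv ℝ ut z (A v) := by
      intro v
      have e1 : HasFDerivAt (fun w => fderiv ℝ ut w (K w))
          ((fderiv ℝ ut z).comp A + (fderiv ℝ (fderiv ℝ ut) z).flip (K z)) z :=
        (hut2 z).clm_apply (hKd z)
      have e2 : HasFDerivAt (fun w => A (ut w)) (A.comp (fderiv ℝ ut z)) z :=
        A.hasFDerivAt.comp z (hutd z)
      have e3 : HasFDerivAt (fun w => fderiv ℝ ut w (K w) - A (ut w)) _ z := e1.sub e2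
      have hzero : (fun w => fderiv ℝ ut w (K w) - A (ut w)) = fun _ => (0:V3) := by
        funext w
        rw [sub_eq_zero]
        exact haxiEq t ht w
      rw [hzero] at e3
      have h4 := e3.unique (hasFDerivAt_const (0:V3) z)
      have h5 := congrArg (fun (L : V3 →L[ℝ] V3) => L v) h4
      simp only [ContinuousLinearMap.sub_apply, ContinuousLinearMap.add_apply,
        ContinuousLinearMap.comp_apply, ContinuousLinearMap.flip_apply,
        ContinuousLinearMap.zero_apply] at h5
      -- h5 : fderiv ut z (A v) + fderiv (fderiv ut) z v (K z) - A (fderiv ut z v) = 0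
      have := sub_eq_zero.mp h5
      -- fderiv ut z (A v) + fderiv (fderiv ut) z v (K z) = A (fderiv ut z v)
      rw [eq_sub_iff_add_eq, add_comm]
      exact this
    have hsymut : ∀ a b : V3, fderiv ℝ (fderiv ℝ ut) z a b = fderiv ℝ (fderiv ℝ ut) z b a :=
      fun a b => ((hut.contDiffAt).isSymmSndFDerivAt (by simpa [minSmoothness_of_isRCLikeNormedField] using EulerAux.two_le_top)).eq a b
    -- transport term
    have hT : HasFDerivAt (fun w => fderiv ℝ ut w (ut w))
        ((fderiv ℝ ut z).comp (fderiv ℝ ut z) + (fderiv ℝ (fderiv ℝ ut) z).flip (ut z)) z :=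
      (hut2 z).clm_apply (hutd z)
    have hTK : ((fderiv ℝ ut z).comp (fderiv ℝ ut z)
          + (fderiv ℝ (fderiv ℝ ut) z).flip (ut z)) (K z)
        = A (fderiv ℝ ut z (ut z)) := by
      simp only [ContinuousLinearMap.add_apply, ContinuousLinearMap.comp_apply,
        ContinuousLinearMap.flip_apply]
      rw [haxiEq t ht z, hsymut (K z) (ut z), hKs (ut z)]
      abel
    -- the full convective field W with ∇p = -W
    set W : V3 → V3 := fun w => vt w + fderiv ℝ ut w (ut w) with hWdef
    set W' : V3 →L[ℝ] V3 := fderiv ℝ vt z + ((fderiv ℝ ut z).comp (fderiv ℝ ut z)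
      + (fderiv ℝ (fderiv ℝ ut) z).flip (ut z)) with hW'def
    have hW : HasFDerivAt W W' z := (hvtd z).add hT
    have hWK : W' (K z) = A (W z) := by
      rw [hW'def, ContinuousLinearMap.add_apply, hvtK, hTK, hWdef]
      simp [map_add]
    have hgrad : grad3 (p t) = fun w => -(W w) := by
      funext w
      have hE := heuler.1 t ht w
      rw [hvt_deriv w] at hE
      have : W w = -grad3 (p t) w := hE
      rw [this, neg_neg]
    have hgradd : HasFDerivAt (grad3 (p t)) (-W') z := by
      rw [hgrad]; exact hW.neg
    -- Hessian representation and symmetry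
    have hpt2 : HasFDerivAt (fderiv ℝ (p t)) (fderiv ℝ (fderiv ℝ (p t)) z) z :=
      (((hpt.fderiv_right EulerAux.top_add_one).differentiable (by simp)) z).hasFDerivAt
    have hgradpi : HasFDerivAt (grad3 (p t))
        (ContinuousLinearMap.pi (fun i => (fderiv ℝ (fderiv ℝ (p t)) z).flip (Pi.single i 1))) z := by
      apply hasFDerivAt_pi.2
      intro i
      have := hpt2.clm_apply (hasFDerivAt_const (Pi.single i 1 : V3) z)
      simpa [grad3, pd] using this
    have huniq : -W' = ContinuousLinearMap.pi
        (fun i => (fderiv ℝ (fderiv ℝ (p t)) z).flip (Pi.single i 1)) :=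
      hgradd.unique hgradpi
    have hsympt : ∀ a b : V3, fderiv ℝ (fderiv ℝ (p t)) z a b = fderiv ℝ (fderiv ℝ (p t)) z b a :=
      fun a b => ((hpt.contDiffAt).isSymmSndFDerivAt (by simpa [minSmoothness_of_isRCLikeNormedField] using EulerAux.two_le_top)).eq a b
    have hHessSym : ∀ a b : V3, dot3 ((-W') a) b = dot3 ((-W') b) a := by
      intro a b
      rw [huniq]
      have h1 : ∀ a b : V3, dot3 ((ContinuousLinearMap.pi
          (fun i => (fderiv ℝ (fderiv ℝ (p t)) z).flip (Pi.single i 1))) a) b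
          = fderiv ℝ (fderiv ℝ (p t)) z a b := by
        intro a b
        rw [clm_eq_sum (fderiv ℝ (fderiv ℝ (p t)) z a) b]
        simp only [dot3, ContinuousLinearMap.pi_apply, ContinuousLinearMap.flip_apply]
        exact Finset.sum_congr rfl fun i _ => mul_comm _ _
      rw [h1, h1, hsympt]
    -- key: (-W') (K z) = A (grad3 (p t) z)
    have hkey : (-W') (K z) = A (grad3 (p t) z) := by
      simp only [ContinuousLinearMap.neg_apply]
      rw [hWK, hgrad]
      simp [map_neg]
    -- assemble
    have hfd := hasFDerivAt_dot3 hgradd (hKd z)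
    have hclm0 : (dotCLM (K z)).comp (-W') + (dotCLM (grad3 (p t) z)).comp A = 0 := by
      ext v
      simp only [ContinuousLinearMap.add_apply, ContinuousLinearMap.comp_apply,
        ContinuousLinearMap.zero_apply, dotCLM_apply]
      rw [show dot3 ((-W') v) (K z) = dot3 ((-W') (K z)) v from hHessSym v (K z), hkey]
      have := hAanti (grad3 (p t) z) v
      have hc : dot3 (A v) (grad3 (p t) z) = dot3 (grad3 (p t) z) (A v) := dot3_comm _ _
      linarith
    rw [hclm0] at hfd
    exact hfd
  exact is_const_of_fderiv_eq_zero (fun z => (hf0 z).differentiableAt)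
    (fun z => (hf0 z).fderiv) x y
end
end

section
/- Let K be a nowhere-vanishing Killing field on an open set U ⊆ ℝ³ and let v be a smooth vector field on U with [K, v] = 0 and ⟨v, K⟩ = 0 at every point of U. Then curl v is everywhere parallel to K: (curl v)(x) × K(x) = 0 for all x ∈ U; equivalently, curl v = φ_v K where φ_v = ⟨curl v, K⟩/|K|². -/
noncomputable section

lemma single_decomp (u : V3) :
    u = u 0 • (Pi.single 0 1 : V3) + u 1 • (Pi.single 1 1 : V3)
      + u 2 • (Pi.single 2 1 : V3) := by
  funext j
  fin_cases j <;> simp [Pi.single_apply]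

lemma clm_apply3 (L : V3 →L[ℝ] V3) (u : V3) (i : Fin 3) :
    L u i = u 0 * L (Pi.single 0 1) i + u 1 * L (Pi.single 1 1) i
      + u 2 * L (Pi.single 2 1) i := by
  conv_lhs => rw [single_decomp u]
  simp

lemma pd_coord (f : V3 → V3) (x : V3) (hf : DifferentiableAt ℝ f x) (i j : Fin 3) :
    pd i (fun y => f y j) x = fderiv ℝ f x (Pi.single i 1) j := by
  have h : HasFDerivAt (fun y => f y j)
      ((ContinuousLinearMap.proj j : V3 →L[ℝ] ℝ).comp (fderiv ℝ f x)) x :=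
    (ContinuousLinearMap.proj j : V3 →L[ℝ] ℝ).hasFDerivAt.comp x hf.hasFDerivAt
  simp [pd, h.fderiv]

/-- if K is a nowhere-vanishing Killing field on an open set U and v is a
smooth axisymmetric ([K,v] = 0) swirl-free (⟨v,K⟩ = 0) field on U, then curl v is
everywhere parallel to K: (curl v) × K = 0, i.e. curl v = (⟨curl v, K⟩/|K|²) K. -/
theorem curl_of_swirlfree_parallel_to_K (U : Set V3) (hU : IsOpen U)
    (K v : V3 → V3)
    (hKsmooth : ContDiffOn ℝ (⊤ : ℕ∞) K U) (hKill : IsKillingOn K U)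
    (hKne : ∀ x ∈ U, K x ≠ 0)
    (hvsmooth : ContDiffOn ℝ (⊤ : ℕ∞) v U)
    (haxi : ∀ x ∈ U, bracket3 K v x = 0)
    (hswirl : ∀ x ∈ U, dot3 (v x) (K x) = 0) :
    ∀ x ∈ U, cross3 (curl3 v x) (K x) = 0 ∧
      curl3 v x = (dot3 (curl3 v x) (K x) / dot3 (K x) (K x)) • K x := by
  intro x hx
  have hxn : U ∈ nhds x := hU.mem_nhds hx
  have hKd : DifferentiableAt ℝ K x := (hKsmooth.contDiffAt hxn).differentiableAt (by simp)
  have hvd : DifferentiableAt ℝ v x := (hvsmooth.contDiffAt hxn).differentiableAt (by simp)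
  set A := fderiv ℝ K x with hA
  set B := fderiv ℝ v x with hB
  -- bracket
  have hbr : ∀ i, B (K x) i = A (v x) i := by
    intro i
    have h := haxi x hx
    have h2 : fderiv ℝ v x (K x) - fderiv ℝ K x (v x) = 0 := h
    have h3 : B (K x) = A (v x) := by
      rw [← hA, ← hB] at h2; exact sub_eq_zero.mp h2
    rw [h3]
  -- antisymmetry
  have hanti : ∀ i j : Fin 3, A (Pi.single i 1) j + A (Pi.single j 1) i = 0 := by
    intro i j
    have h := hKill x hx (Pi.single i 1) (Pi.single j 1)
    rw [← hA] at h
    simpa [dot3, Fin.sum_univ_three, Pi.single_apply, mul_comm] using h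
  -- gradient of the swirl vanishes
  have hKcoord : ∀ i : Fin 3, HasFDerivAt (fun y => K y i)
      ((ContinuousLinearMap.proj i : V3 →L[ℝ] ℝ).comp A) x :=
    fun i => (ContinuousLinearMap.proj i : V3 →L[ℝ] ℝ).hasFDerivAt.comp x hKd.hasFDerivAt
  have hvcoord : ∀ i : Fin 3, HasFDerivAt (fun y => v y i)
      ((ContinuousLinearMap.proj i : V3 →L[ℝ] ℝ).comp B) x :=
    fun i => (ContinuousLinearMap.proj i : V3 →L[ℝ] ℝ).hasFDerivAt.comp x hvd.hasFDerivAt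
  set L : V3 →L[ℝ] ℝ := ∑ i : Fin 3,
      (v x i • ((ContinuousLinearMap.proj i : V3 →L[ℝ] ℝ).comp A)
        + K x i • ((ContinuousLinearMap.proj i : V3 →L[ℝ] ℝ).comp B)) with hL
  have hfd : HasFDerivAt (fun y => dot3 (v y) (K y)) L x := by
    have : HasFDerivAt (fun y => ∑ i : Fin 3, v y i * K y i) L x := by
      rw [hL]
      exact HasFDerivAt.fun_sum fun i _ => (hvcoord i).mul (hKcoord i)
    simpa [dot3] using this
  have hL0 : L = 0 := by
    have heq : (fun y => dot3 (v y) (K y)) =ᶠ[nhds x] fun _ => (0 : ℝ) :=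
      Filter.eventuallyEq_of_mem hxn fun y hy => hswirl y hy
    have h1 : fderiv ℝ (fun y => dot3 (v y) (K y)) x
        = fderiv ℝ (fun _ => (0 : ℝ)) x := heq.fderiv_eq
    rw [fderiv_fun_const] at h1
    rw [← hfd.fderiv, h1]; rfl
  have hgrad : ∀ j : Fin 3,
      (∑ i : Fin 3, (v x i * A (Pi.single j 1) i + K x i * B (Pi.single j 1) i)) = 0 := by
    intro j
    have h := congrFun (congrArg (fun (M : V3 →L[ℝ] ℝ) => (M : V3 → ℝ)) hL0) (Pi.single j 1)
    rw [hL] at h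
    simpa [ContinuousLinearMap.sum_apply, ContinuousLinearMap.add_apply,
      ContinuousLinearMap.smul_apply, ContinuousLinearMap.comp_apply,
      ContinuousLinearMap.proj_apply, smul_eq_mul] using h
  -- scalar abbreviations
  have hbr' : ∀ i, K x 0 * B (Pi.single 0 1) i + K x 1 * B (Pi.single 1 1) i
      + K x 2 * B (Pi.single 2 1) i
      = v x 0 * A (Pi.single 0 1) i + v x 1 * A (Pi.single 1 1) i
      + v x 2 * A (Pi.single 2 1) i := by
    intro i
    have h := hbr i
    rw [clm_apply3 B (K x) i, clm_apply3 A (v x) i] at h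
    exact h
  have hgrad' : ∀ j : Fin 3,
      v x 0 * A (Pi.single j 1) 0 + K x 0 * B (Pi.single j 1) 0
      + (v x 1 * A (Pi.single j 1) 1 + K x 1 * B (Pi.single j 1) 1)
      + (v x 2 * A (Pi.single j 1) 2 + K x 2 * B (Pi.single j 1) 2) = 0 := by
    intro j
    simpa [Fin.sum_univ_three] using hgrad j
  -- curl components
  have hcurl : ∀ i j : Fin 3, pd i (fun y => v y j) x = B (Pi.single i 1) j :=
    fun i j => pd_coord v x hvd i j
  have e0 : cross3 (curl3 v x) (K x) 0 = 0 := by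
    simp only [cross3, curl3, hcurl, Matrix.cons_val_zero, Matrix.cons_val_one,
      Matrix.head_cons, Matrix.cons_val_two, Matrix.tail_cons]
    linear_combination hbr' 0 - hgrad' 0 + v x 0 * hanti 0 0
      + v x 1 * hanti 1 0 + v x 2 * hanti 2 0
  have e1 : cross3 (curl3 v x) (K x) 1 = 0 := by
    simp only [cross3, curl3, hcurl, Matrix.cons_val_zero, Matrix.cons_val_one,
      Matrix.head_cons, Matrix.cons_val_two, Matrix.tail_cons]
    linear_combination hbr' 1 - hgrad' 1 + v x 0 * hanti 0 1
      + v x 1 * hanti 1 1 + v x 2 * hanti 2 1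
  have e2 : cross3 (curl3 v x) (K x) 2 = 0 := by
    simp only [cross3, curl3, hcurl, Matrix.cons_val_zero, Matrix.cons_val_one,
      Matrix.head_cons, Matrix.cons_val_two, Matrix.tail_cons]
    linear_combination hbr' 2 - hgrad' 2 + v x 0 * hanti 0 2
      + v x 1 * hanti 1 2 + v x 2 * hanti 2 2
  have hcross : cross3 (curl3 v x) (K x) = 0 := by
    funext i
    fin_cases i
    · exact e0
    · exact e1
    · exact e2
  refine ⟨hcross, ?_⟩
  -- from cross = 0 deduce proportionality
  have hkk : (0 : ℝ) < dot3 (K x) (K x) := by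
    have hor : K x 0 ≠ 0 ∨ K x 1 ≠ 0 ∨ K x 2 ≠ 0 := by
      by_contra h
      push_neg at h
      apply hKne x hx
      funext j
      fin_cases j <;> simp [h.1, h.2.1, h.2.2]
    have h0 : (0:ℝ) ≤ K x 0 * K x 0 := mul_self_nonneg _
    have h1 : (0:ℝ) ≤ K x 1 * K x 1 := mul_self_nonneg _
    have h2 : (0:ℝ) ≤ K x 2 * K x 2 := mul_self_nonneg _
    simp only [dot3, Fin.sum_univ_three]
    rcases hor with h | h | h <;> [skip; skip; skip] <;>
      have := mul_self_pos.mpr h <;> linarith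
  have hkk' : dot3 (K x) (K x) ≠ 0 := ne_of_gt hkk
  have hc0 : curl3 v x 1 * K x 2 - curl3 v x 2 * K x 1 = 0 := congrFun hcross 0
  have hc1 : curl3 v x 2 * K x 0 - curl3 v x 0 * K x 2 = 0 := congrFun hcross 1
  have hc2 : curl3 v x 0 * K x 1 - curl3 v x 1 * K x 0 = 0 := congrFun hcross 2
  have key : ∀ i : Fin 3,
      curl3 v x i * (K x 0 * K x 0 + K x 1 * K x 1 + K x 2 * K x 2)
        = (curl3 v x 0 * K x 0 + curl3 v x 1 * K x 1 + curl3 v x 2 * K x 2) * K x i → 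
      curl3 v x i = (dot3 (curl3 v x) (K x) / dot3 (K x) (K x)) * K x i := by
    intro i h
    rw [div_mul_eq_mul_div, eq_div_iff hkk']
    simpa only [dot3, Fin.sum_univ_three] using h
  funext i
  rw [Pi.smul_apply, smul_eq_mul]
  fin_cases i
  · exact key 0 (by linear_combination K x 1 * hc2 - K x 2 * hc1)
  · exact key 1 (by linear_combination K x 2 * hc0 - K x 0 * hc2)
  · exact key 2 (by linear_combination K x 0 * hc1 - K x 1 * hc0)
end
end

section
/- Let K be a nowhere-vanishing Killing field on ℝ³ and let (u,p) be a smooth solution of the incompressible Euler equations on I × ℝ³ with [K, u(t,·)] = 0 for every t ∈ I. Suppose the vorticity has the form curlₓ u(t,x) = φ(t,x) K(x) for a smooth function φ : I × ℝ³ → ℝ. Then φ is transported by the flow: ∂ₜφ + ⟨u, ∇ₓφ⟩ = 0 on I × ℝ³. -/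
noncomputable section

section Helpers

variable {α : Type*} [NormedAddCommGroup α] [NormedSpace ℝ α]

lemma fderiv_slice_x (f : ℝ × V3 → α) (t : ℝ) (x : V3)
    (hf : DifferentiableAt ℝ f (t, x)) (v : V3) :
    fderiv ℝ (fun y => f (t, y)) x v = fderiv ℝ f (t, x) (0, v) := by
  have h : HasFDerivAt (fun y : V3 => (t, y))
      (((0 : V3 →L[ℝ] ℝ)).prod (ContinuousLinearMap.id ℝ V3)) x :=
    (hasFDerivAt_const t x).prodMk (hasFDerivAt_id x)
  have h2 := (hf.hasFDerivAt.comp x h).fderiv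
  calc fderiv ℝ (fun y => f (t, y)) x v
      = fderiv ℝ (f ∘ fun y : V3 => (t, y)) x v := rfl
    _ = fderiv ℝ f (t, x) (0, v) := by rw [h2]; rfl

lemma deriv_slice_t (f : ℝ × V3 → α) (t : ℝ) (x : V3)
    (hf : DifferentiableAt ℝ f (t, x)) :
    deriv (fun s => f (s, x)) t = fderiv ℝ f (t, x) (1, 0) := by
  have h : HasFDerivAt (fun s : ℝ => (s, x))
      ((ContinuousLinearMap.id ℝ ℝ).prod (0 : ℝ →L[ℝ] V3)) t :=
    (hasFDerivAt_id t).prodMk (hasFDerivAt_const x t)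
  have h2 := ((hf.hasFDerivAt.comp t h).hasDerivAt).deriv
  calc deriv (fun s => f (s, x)) t = deriv (f ∘ fun s : ℝ => (s, x)) t := rfl
    _ = fderiv ℝ f (t, x) (1, 0) := by rw [h2]; rfl

lemma fderiv_comp_snd (g : V3 → α) (t : ℝ) (x : V3)
    (hg : DifferentiableAt ℝ g x) (v : ℝ × V3) :
    fderiv ℝ (fun q : ℝ × V3 => g q.2) (t, x) v = fderiv ℝ g x v.2 := by
  have h2 := (hg.hasFDerivAt.comp (t, x)
    ((ContinuousLinearMap.snd ℝ ℝ V3).hasFDerivAt)).fderiv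
  calc fderiv ℝ (fun q : ℝ × V3 => g q.2) (t, x) v
      = fderiv ℝ (g ∘ ⇑(ContinuousLinearMap.snd ℝ ℝ V3)) (t, x) v := rfl
    _ = fderiv ℝ g x v.2 := by rw [h2]; rfl

lemma fderiv_apply_comp {β : Type*} [NormedAddCommGroup β] [NormedSpace ℝ β]
    (f : β → V3) (y : β) (hf : DifferentiableAt ℝ f y) (k : Fin 3) (v : β) :
    fderiv ℝ (fun z => f z k) y v = fderiv ℝ f y v k := by
  have h2 := ((ContinuousLinearMap.proj (R := ℝ) (φ := fun _ : Fin 3 => ℝ)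
      k).hasFDerivAt.comp y hf.hasFDerivAt).fderiv
  calc fderiv ℝ (fun z => f z k) y v
      = fderiv ℝ (⇑(ContinuousLinearMap.proj (R := ℝ) (φ := fun _ : Fin 3 => ℝ) k) ∘ f) y v := rfl
    _ = fderiv ℝ f y v k := by rw [h2]; rfl

lemma fderiv_expand (f : V3 → ℝ) (x : V3) (w : V3) :
    fderiv ℝ f x w = ∑ j, w j * fderiv ℝ f x (Pi.single j 1) := by
  have hw : w = ∑ j, w j • (Pi.single j 1 : V3) := by
    funext l
    simp [Finset.sum_apply, Pi.single_apply]
  conv_lhs => rw [hw]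
  rw [map_sum]
  simp [smul_eq_mul]

lemma dd_comm (f : ℝ × V3 → ℝ) (q : ℝ × V3) (hf : ContDiffAt ℝ (⊤:ℕ∞) f q)
    (v w : ℝ × V3) :
    fderiv ℝ (fun q' => fderiv ℝ f q' v) q w
      = fderiv ℝ (fun q' => fderiv ℝ f q' w) q v := by
  have hd : DifferentiableAt ℝ (fderiv ℝ f) q :=
    (hf.fderiv_right (m := (⊤:ℕ∞)) (by exact_mod_cast le_top)).differentiableAt
      (by simp)
  have key : ∀ z : ℝ × V3, fderiv ℝ (fun q' => fderiv ℝ f q' z) q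
      = (ContinuousLinearMap.apply ℝ ℝ z).comp (fderiv ℝ (fderiv ℝ f) q) := by
    intro z
    exact ((ContinuousLinearMap.apply ℝ ℝ z).hasFDerivAt.comp q hd.hasFDerivAt).fderiv
  have hsymm := hf.isSymmSndFDerivAt (n := ((⊤:ℕ∞) : WithTop ℕ∞))
    (by rw [minSmoothness_of_isRCLikeNormedField]; exact WithTop.coe_le_coe.mpr le_top)
  rw [key v, key w]
  simpa using hsymm w v

lemma contDiffAt_dd (f : ℝ × V3 → ℝ) (q : ℝ × V3) (hf : ContDiffAt ℝ (⊤:ℕ∞) f q)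
    (v : ℝ × V3) : ContDiffAt ℝ (⊤:ℕ∞) (fun q' => fderiv ℝ f q' v) q := by
  have h := hf.fderiv_right (m := (⊤:ℕ∞)) (by exact_mod_cast le_top)
  exact (ContinuousLinearMap.apply ℝ ℝ v).contDiff.contDiffAt.comp q h

end Helpers

section Aux

open Filter

/-- spacetime component functions -/
def Fc (u : ℝ → V3 → V3) (k : Fin 3) : ℝ × V3 → ℝ := fun q => u q.1 q.2 k
def Pc (p : ℝ → V3 → ℝ) : ℝ × V3 → ℝ := fun q => p q.1 q.2
def e3 (j : Fin 3) : ℝ × V3 := (0, Pi.single j 1)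
def et3 : ℝ × V3 := (1, 0)

lemma cast1 : ((⊤:ℕ∞) : WithTop ℕ∞) ≠ 0 := by simp

lemma piecewise_smooth {u : ℝ → V3 → V3} {I : Set ℝ} (hIopen : IsOpen I)
    (hu : ContDiffOn ℝ (⊤ : ℕ∞) (fun q : ℝ × V3 => u q.1 q.2) (I ×ˢ (Set.univ : Set V3)))
    {q : ℝ × V3} (hq : q ∈ I ×ˢ (Set.univ : Set V3)) (k : Fin 3) :
    ContDiffAt ℝ (⊤:ℕ∞) (Fc u k) q := by
  have h1 : ContDiffAt ℝ (⊤:ℕ∞) (fun q : ℝ × V3 => u q.1 q.2) q :=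
    hu.contDiffAt ((hIopen.prod isOpen_univ).mem_nhds hq)
  exact (ContinuousLinearMap.proj (R := ℝ) (φ := fun _ : Fin 3 => ℝ)
    k).contDiff.contDiffAt.comp q h1

lemma pres_smooth {p : ℝ → V3 → ℝ} {I : Set ℝ} (hIopen : IsOpen I)
    (hp : ContDiffOn ℝ (⊤ : ℕ∞) (fun q : ℝ × V3 => p q.1 q.2) (I ×ˢ (Set.univ : Set V3)))
    {q : ℝ × V3} (hq : q ∈ I ×ˢ (Set.univ : Set V3)) :
    ContDiffAt ℝ (⊤:ℕ∞) (Pc p) q :=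
  hp.contDiffAt ((hIopen.prod isOpen_univ).mem_nhds hq)

/-- differentiability of the full vector field -/
lemma vec_diff {u : ℝ → V3 → V3} {I : Set ℝ} (hIopen : IsOpen I)
    (hu : ContDiffOn ℝ (⊤ : ℕ∞) (fun q : ℝ × V3 => u q.1 q.2) (I ×ˢ (Set.univ : Set V3)))
    {q : ℝ × V3} (hq : q ∈ I ×ˢ (Set.univ : Set V3)) :
    DifferentiableAt ℝ (fun q : ℝ × V3 => u q.1 q.2) q :=
  (hu.contDiffAt ((hIopen.prod isOpen_univ).mem_nhds hq)).differentiableAt cast1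

/-- differentiability of the time slice -/
lemma slice_diff {u : ℝ → V3 → V3} {I : Set ℝ} (hIopen : IsOpen I)
    (hu : ContDiffOn ℝ (⊤ : ℕ∞) (fun q : ℝ × V3 => u q.1 q.2) (I ×ˢ (Set.univ : Set V3)))
    {t : ℝ} {x : V3} (hq : (t, x) ∈ I ×ˢ (Set.univ : Set V3)) :
    DifferentiableAt ℝ (u t) x := by
  have h := (vec_diff hIopen hu hq).comp x
    (((differentiableAt_const t)).prodMk differentiableAt_id)
  exact h

/-- flat momentum equation -/
lemma flat_momentum {I : Set ℝ} (hIopen : IsOpen I) {u : ℝ → V3 → V3} {p : ℝ → V3 → ℝ}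
    (hu : ContDiffOn ℝ (⊤ : ℕ∞) (fun q : ℝ × V3 => u q.1 q.2) (I ×ˢ (Set.univ : Set V3)))
    (hp : ContDiffOn ℝ (⊤ : ℕ∞) (fun q : ℝ × V3 => p q.1 q.2) (I ×ˢ (Set.univ : Set V3)))
    (heuler : IsEulerSolution I u p) :
    ∀ q' ∈ I ×ˢ (Set.univ : Set V3), ∀ k : Fin 3,
      fderiv ℝ (Fc u k) q' et3 + (∑ j, Fc u j q' * fderiv ℝ (Fc u k) q' (e3 j))
        + fderiv ℝ (Pc p) q' (e3 k) = 0 := by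
  rintro ⟨t', x'⟩ hq' k
  have ht' : t' ∈ I := hq'.1
  have hFvd := vec_diff hIopen hu hq'
  have hud : DifferentiableAt ℝ (u t') x' := slice_diff hIopen hu hq'
  have hFkd : DifferentiableAt ℝ (Fc u k) (t', x') :=
    (piecewise_smooth hIopen hu hq' k).differentiableAt cast1
  have hPd : DifferentiableAt ℝ (Pc p) (t', x') :=
    (pres_smooth hIopen hp hq').differentiableAt cast1
  have hmome := congrFun (heuler.1 t' ht' x') k
  simp only [Pi.add_apply, Pi.neg_apply] at hmome
  -- time derivative
  have h1 : deriv (fun s => u s x') t' k = fderiv ℝ (Fc u k) (t', x') et3 := by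
    rw [deriv_slice_t _ t' x' hFvd]
    rw [← fderiv_apply_comp _ _ hFvd k]
    rfl
  -- transport term
  have h2 : fderiv ℝ (u t') x' (u t' x') k
      = ∑ j, Fc u j (t', x') * fderiv ℝ (Fc u k) (t', x') (e3 j) := by
    rw [← fderiv_apply_comp _ _ hud k, fderiv_expand]
    refine Finset.sum_congr rfl fun j _ => ?_
    congr 1
    exact fderiv_slice_x (Fc u k) t' x' hFkd (Pi.single j 1)
  -- pressure term
  have h3 : grad3 (p t') x' k = fderiv ℝ (Pc p) (t', x') (e3 k) := by
    show pd k (p t') x' = _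
    rw [pd]
    exact fderiv_slice_x (Pc p) t' x' hPd (Pi.single k 1)
  rw [h1, h2, h3] at hmome
  linarith
end Aux

section Aux2

/-- flat divergence -/
lemma flat_div {I : Set ℝ} (hIopen : IsOpen I) {u : ℝ → V3 → V3} {p : ℝ → V3 → ℝ}
    (hu : ContDiffOn ℝ (⊤ : ℕ∞) (fun q : ℝ × V3 => u q.1 q.2) (I ×ˢ (Set.univ : Set V3)))
    (heuler : IsEulerSolution I u p)
    {t : ℝ} {x : V3} (hq : (t, x) ∈ I ×ˢ (Set.univ : Set V3)) :
    fderiv ℝ (Fc u 0) (t,x) (e3 0) + fderiv ℝ (Fc u 1) (t,x) (e3 1)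
      + fderiv ℝ (Fc u 2) (t,x) (e3 2) = 0 := by
  have ht : t ∈ I := hq.1
  have hud : DifferentiableAt ℝ (u t) x := slice_diff hIopen hu hq
  have hd := heuler.2 t ht x
  rw [div3] at hd
  have hterm : ∀ i : Fin 3, fderiv ℝ (u t) x (Pi.single i 1) i
      = fderiv ℝ (Fc u i) (t,x) (e3 i) := by
    intro i
    rw [← fderiv_apply_comp _ _ hud i]
    exact fderiv_slice_x (Fc u i) t x
      ((piecewise_smooth hIopen hu hq i).differentiableAt cast1) (Pi.single i 1)
  rw [Fin.sum_univ_three, hterm 0, hterm 1, hterm 2] at hd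
  linarith

/-- flat vorticity relation, all three components -/
lemma flat_vort {I : Set ℝ} (hIopen : IsOpen I) {u : ℝ → V3 → V3}
    (hu : ContDiffOn ℝ (⊤ : ℕ∞) (fun q : ℝ × V3 => u q.1 q.2) (I ×ˢ (Set.univ : Set V3)))
    {K : V3 → V3} {φ : ℝ → V3 → ℝ}
    (hvort : ∀ t ∈ I, ∀ x : V3, curl3 (u t) x = φ t x • K x) :
    ∀ q' ∈ I ×ˢ (Set.univ : Set V3),
      (fderiv ℝ (Fc u 2) q' (e3 1) - fderiv ℝ (Fc u 1) q' (e3 2)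
          = φ q'.1 q'.2 * K q'.2 0) ∧
      (fderiv ℝ (Fc u 0) q' (e3 2) - fderiv ℝ (Fc u 2) q' (e3 0)
          = φ q'.1 q'.2 * K q'.2 1) ∧
      (fderiv ℝ (Fc u 1) q' (e3 0) - fderiv ℝ (Fc u 0) q' (e3 1)
          = φ q'.1 q'.2 * K q'.2 2) := by
  rintro ⟨t', x'⟩ hq'
  have ht' : t' ∈ I := hq'.1
  have hcurl := hvort t' ht' x'
  have hterm : ∀ i j : Fin 3, pd j (fun y => u t' y i) x'
      = fderiv ℝ (Fc u i) (t', x') (e3 j) := by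
    intro i j
    rw [pd]
    exact fderiv_slice_x (Fc u i) t' x'
      ((piecewise_smooth hIopen hu hq' i).differentiableAt cast1) (Pi.single j 1)
  refine ⟨?_, ?_, ?_⟩
  · have h0 := congrFun hcurl 0
    simp only [curl3, Matrix.cons_val_zero, Pi.smul_apply, smul_eq_mul] at h0
    rw [hterm 2 1, hterm 1 2] at h0
    exact h0
  · have h1 := congrFun hcurl 1
    simp only [curl3, Matrix.cons_val_one, Matrix.head_cons, Pi.smul_apply, smul_eq_mul] at h1
    rw [hterm 0 2, hterm 2 0] at h1
    exact h1
  · have h2 := congrFun hcurl 2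
    simp only [curl3, Matrix.cons_val_two, Matrix.tail_cons, Matrix.head_cons,
      Pi.smul_apply, smul_eq_mul] at h2
    rw [hterm 1 0, hterm 0 1] at h2
    exact h2

/-- flat axisymmetry at a point -/
lemma flat_axi {I : Set ℝ} (hIopen : IsOpen I) {u : ℝ → V3 → V3}
    (hu : ContDiffOn ℝ (⊤ : ℕ∞) (fun q : ℝ × V3 => u q.1 q.2) (I ×ˢ (Set.univ : Set V3)))
    {K : V3 → V3} (hKsmooth : ContDiff ℝ (⊤ : ℕ∞) K)
    (haxi : ∀ t ∈ I, ∀ x : V3, bracket3 K (u t) x = 0)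
    {t : ℝ} {x : V3} (hq : (t, x) ∈ I ×ˢ (Set.univ : Set V3)) (m : Fin 3) :
    ∑ j, K x j * fderiv ℝ (Fc u m) (t,x) (e3 j)
      = ∑ j, Fc u j (t,x) * fderiv ℝ (fun q : ℝ × V3 => K q.2 m) (t,x) (e3 j) := by
  have ht : t ∈ I := hq.1
  have hud : DifferentiableAt ℝ (u t) x := slice_diff hIopen hu hq
  have hKd : DifferentiableAt ℝ K x := (hKsmooth.differentiable cast1) x
  have hb := congrFun (haxi t ht x) m
  rw [bracket3] at hb
  simp only [Pi.sub_apply, Pi.zero_apply, sub_eq_zero] at hb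
  -- hb : fderiv (u t) x (K x) m = fderiv K x (u t x) m
  have hL : fderiv ℝ (u t) x (K x) m
      = ∑ j, K x j * fderiv ℝ (Fc u m) (t,x) (e3 j) := by
    rw [← fderiv_apply_comp _ _ hud m, fderiv_expand]
    refine Finset.sum_congr rfl fun j _ => ?_
    congr 1
    exact fderiv_slice_x (Fc u m) t x
      ((piecewise_smooth hIopen hu hq m).differentiableAt cast1) (Pi.single j 1)
  have hR : fderiv ℝ K x (u t x) m
      = ∑ j, Fc u j (t,x) * fderiv ℝ (fun q : ℝ × V3 => K q.2 m) (t,x) (e3 j) := by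
    rw [← fderiv_apply_comp _ _ hKd m, fderiv_expand]
    refine Finset.sum_congr rfl fun j _ => ?_
    congr 1
    have hKmd : DifferentiableAt ℝ (fun y => K y m) x :=
      (ContinuousLinearMap.proj (R := ℝ) (φ := fun _ : Fin 3 => ℝ)
        m).differentiableAt.comp x hKd
    exact (fderiv_comp_snd (fun y => K y m) t x hKmd (e3 j)).symm
  rw [hL] at hb
  rw [hR] at hb
  exact hb

end Aux2

section Aux3

/-- differentiated momentum equation at a point -/
lemma diff_momentum {I : Set ℝ} (hIopen : IsOpen I) {u : ℝ → V3 → V3} {p : ℝ → V3 → ℝ}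
    (hu : ContDiffOn ℝ (⊤ : ℕ∞) (fun q : ℝ × V3 => u q.1 q.2) (I ×ˢ (Set.univ : Set V3)))
    (hp : ContDiffOn ℝ (⊤ : ℕ∞) (fun q : ℝ × V3 => p q.1 q.2) (I ×ˢ (Set.univ : Set V3)))
    (heuler : IsEulerSolution I u p)
    {t : ℝ} {x : V3} (hq : (t, x) ∈ I ×ˢ (Set.univ : Set V3)) (k : Fin 3) (v : ℝ × V3) :
    fderiv ℝ (fun q' => fderiv ℝ (Fc u k) q' et3) (t,x) v
      + (Fc u 0 (t,x) * fderiv ℝ (fun q' => fderiv ℝ (Fc u k) q' (e3 0)) (t,x) v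
          + fderiv ℝ (Fc u k) (t,x) (e3 0) * fderiv ℝ (Fc u 0) (t,x) v)
      + (Fc u 1 (t,x) * fderiv ℝ (fun q' => fderiv ℝ (Fc u k) q' (e3 1)) (t,x) v
          + fderiv ℝ (Fc u k) (t,x) (e3 1) * fderiv ℝ (Fc u 1) (t,x) v)
      + (Fc u 2 (t,x) * fderiv ℝ (fun q' => fderiv ℝ (Fc u k) q' (e3 2)) (t,x) v
          + fderiv ℝ (Fc u k) (t,x) (e3 2) * fderiv ℝ (Fc u 2) (t,x) v)
      + fderiv ℝ (fun q' => fderiv ℝ (Pc p) q' (e3 k)) (t,x) v = 0 := by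
  have hFk : ContDiffAt ℝ (⊤:ℕ∞) (Fc u k) (t,x) := piecewise_smooth hIopen hu hq k
  have hPk : ContDiffAt ℝ (⊤:ℕ∞) (Pc p) (t,x) := pres_smooth hIopen hp hq
  have hA : HasFDerivAt (fun q' => fderiv ℝ (Fc u k) q' et3)
      (fderiv ℝ (fun q' => fderiv ℝ (Fc u k) q' et3) (t,x)) (t,x) :=
    ((contDiffAt_dd _ _ hFk et3).differentiableAt cast1).hasFDerivAt
  have hg : ∀ j : Fin 3, HasFDerivAt (fun q' => fderiv ℝ (Fc u k) q' (e3 j))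
      (fderiv ℝ (fun q' => fderiv ℝ (Fc u k) q' (e3 j)) (t,x)) (t,x) := fun j =>
    ((contDiffAt_dd _ _ hFk (e3 j)).differentiableAt cast1).hasFDerivAt
  have hF : ∀ j : Fin 3, HasFDerivAt (Fc u j)
      (fderiv ℝ (Fc u j) (t,x)) (t,x) := fun j =>
    ((piecewise_smooth hIopen hu hq j).differentiableAt cast1).hasFDerivAt
  have hC : HasFDerivAt (fun q' => fderiv ℝ (Pc p) q' (e3 k))
      (fderiv ℝ (fun q' => fderiv ℝ (Pc p) q' (e3 k)) (t,x)) (t,x) :=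
    ((contDiffAt_dd _ _ hPk (e3 k)).differentiableAt cast1).hasFDerivAt
  have hB : ∀ j : Fin 3, HasFDerivAt (fun q' => Fc u j q' * fderiv ℝ (Fc u k) q' (e3 j))
      (Fc u j (t,x) • fderiv ℝ (fun q' => fderiv ℝ (Fc u k) q' (e3 j)) (t,x)
        + fderiv ℝ (Fc u k) (t,x) (e3 j) • fderiv ℝ (Fc u j) (t,x)) (t,x) := fun j =>
    (hF j).mul (hg j)
  have htot := (hA.add (((hB 0).add (hB 1)).add (hB 2))).add hC
  have hzero : (fun q' => (fderiv ℝ (Fc u k) q' et3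
      + ((Fc u 0 q' * fderiv ℝ (Fc u k) q' (e3 0)
          + Fc u 1 q' * fderiv ℝ (Fc u k) q' (e3 1))
          + Fc u 2 q' * fderiv ℝ (Fc u k) q' (e3 2)))
      + fderiv ℝ (Pc p) q' (e3 k)) =ᶠ[nhds (t,x)] fun _ => (0:ℝ) := by
    filter_upwards [((hIopen.prod isOpen_univ)).mem_nhds hq] with r hr
    have h := flat_momentum hIopen hu hp heuler r hr k
    rw [Fin.sum_univ_three] at h
    linarith

  have hL0 := htot.fderiv
  simp only [Pi.add_def] at hL0
  rw [hzero.fderiv_eq, fderiv_fun_const] at hL0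
  have hv := congrArg (fun L : (ℝ × V3) →L[ℝ] ℝ => L v) hL0
  simp only [ContinuousLinearMap.add_apply, ContinuousLinearMap.coe_smul',
    Pi.smul_apply, smul_eq_mul, Pi.zero_apply, ContinuousLinearMap.zero_apply] at hv
  linarith

end Aux3

section Aux4

lemma kap_diff {K : V3 → V3} (hKsmooth : ContDiff ℝ (⊤ : ℕ∞) K) (m : Fin 3) :
    ContDiff ℝ (⊤:ℕ∞) (fun q : ℝ × V3 => K q.2 m) := by
  exact ((ContinuousLinearMap.proj (R := ℝ) (φ := fun _ : Fin 3 => ℝ)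
    m).contDiff.comp hKsmooth).comp contDiff_snd

lemma kap_et {K : V3 → V3} (hKsmooth : ContDiff ℝ (⊤ : ℕ∞) K) (m : Fin 3)
    (t : ℝ) (x : V3) :
    fderiv ℝ (fun q : ℝ × V3 => K q.2 m) (t,x) et3 = 0 := by
  have hKmd : DifferentiableAt ℝ (fun y => K y m) x :=
    (ContinuousLinearMap.proj (R := ℝ) (φ := fun _ : Fin 3 => ℝ)
      m).differentiableAt.comp x ((hKsmooth.differentiable cast1) x)
  rw [fderiv_comp_snd (fun y => K y m) t x hKmd et3]
  show fderiv ℝ (fun y => K y m) x 0 = 0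
  exact (fderiv ℝ (fun y => K y m) x).map_zero

/-- differentiated vorticity relation -/
lemma diff_vort {I : Set ℝ} (hIopen : IsOpen I) {u : ℝ → V3 → V3}
    (hu : ContDiffOn ℝ (⊤ : ℕ∞) (fun q : ℝ × V3 => u q.1 q.2) (I ×ˢ (Set.univ : Set V3)))
    {K : V3 → V3} (hKsmooth : ContDiff ℝ (⊤ : ℕ∞) K)
    {φ : ℝ → V3 → ℝ}
    (hφ : ContDiffOn ℝ (⊤ : ℕ∞) (fun q : ℝ × V3 => φ q.1 q.2) (I ×ˢ (Set.univ : Set V3)))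
    {t : ℝ} {x : V3} (hq : (t, x) ∈ I ×ˢ (Set.univ : Set V3))
    (α β m : Fin 3)
    (hvf : ∀ q' ∈ I ×ˢ (Set.univ : Set V3),
      fderiv ℝ (Fc u β) q' (e3 α) - fderiv ℝ (Fc u α) q' (e3 β)
        = φ q'.1 q'.2 * K q'.2 m)
    (v : ℝ × V3) :
    fderiv ℝ (fun q' => fderiv ℝ (Fc u β) q' (e3 α)) (t,x) v
      - fderiv ℝ (fun q' => fderiv ℝ (Fc u α) q' (e3 β)) (t,x) v
    = fderiv ℝ (Pc φ) (t,x) v * K x m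
      + φ t x * fderiv ℝ (fun q : ℝ × V3 => K q.2 m) (t,x) v := by
  have hFα : ContDiffAt ℝ (⊤:ℕ∞) (Fc u α) (t,x) := piecewise_smooth hIopen hu hq α
  have hFβ : ContDiffAt ℝ (⊤:ℕ∞) (Fc u β) (t,x) := piecewise_smooth hIopen hu hq β
  have hΦd : DifferentiableAt ℝ (Pc φ) (t,x) :=
    (pres_smooth hIopen hφ hq).differentiableAt cast1
  have hκd : DifferentiableAt ℝ (fun q : ℝ × V3 => K q.2 m) (t,x) :=
    ((kap_diff hKsmooth m).differentiable cast1) (t,x)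
  have hL := (((contDiffAt_dd _ _ hFβ (e3 α)).differentiableAt cast1).hasFDerivAt.sub
      ((contDiffAt_dd _ _ hFα (e3 β)).differentiableAt cast1).hasFDerivAt)
  have hR := hΦd.hasFDerivAt.mul hκd.hasFDerivAt
  have heq : (fun q' => fderiv ℝ (Fc u β) q' (e3 α) - fderiv ℝ (Fc u α) q' (e3 β))
      =ᶠ[nhds (t,x)] (fun q' => Pc φ q' * K q'.2 m) := by
    filter_upwards [((hIopen.prod isOpen_univ)).mem_nhds hq] with r hr
    exact hvf r hr
  have h1 := hL.fderiv
  simp only [Pi.sub_def] at h1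
  simp only [Pi.mul_def] at hR
  rw [heq.fderiv_eq, hR.fderiv] at h1
  have hv := congrArg (fun L : (ℝ × V3) →L[ℝ] ℝ => L v) h1
  simp only [ContinuousLinearMap.add_apply, ContinuousLinearMap.coe_sub', Pi.sub_apply,
    ContinuousLinearMap.coe_smul', Pi.smul_apply, smul_eq_mul] at hv
  have : Pc φ (t,x) = φ t x := rfl
  rw [this] at hv
  linarith
end Aux4

/-- if K is a nowhere-vanishing Killing field, (u,p) a smooth axisymmetric
Euler solution whose vorticity has the form curlₓ u = φ K, then φ is transported by the
flow: ∂ₜφ + ⟨u, ∇ₓφ⟩ = 0. -/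
theorem vorticity_factor_transported (I : Set ℝ) (hIopen : IsOpen I) (hI0 : (0:ℝ) ∈ I)
    (hIconn : I.OrdConnected)
    (K : V3 → V3) (hKsmooth : ContDiff ℝ (⊤ : ℕ∞) K)
    (hKill : IsKillingOn K Set.univ) (hKne : ∀ x : V3, K x ≠ 0)
    (u : ℝ → V3 → V3) (p : ℝ → V3 → ℝ)
    (hu : ContDiffOn ℝ (⊤ : ℕ∞) (fun q : ℝ × V3 => u q.1 q.2) (I ×ˢ (Set.univ : Set V3)))
    (hp : ContDiffOn ℝ (⊤ : ℕ∞) (fun q : ℝ × V3 => p q.1 q.2) (I ×ˢ (Set.univ : Set V3)))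
    (heuler : IsEulerSolution I u p)
    (haxi : ∀ t ∈ I, ∀ x : V3, bracket3 K (u t) x = 0)
    (φ : ℝ → V3 → ℝ)
    (hφ : ContDiffOn ℝ (⊤ : ℕ∞) (fun q : ℝ × V3 => φ q.1 q.2) (I ×ˢ (Set.univ : Set V3)))
    (hvort : ∀ t ∈ I, ∀ x : V3, curl3 (u t) x = φ t x • K x) :
    ∀ t ∈ I, ∀ x : V3,
      deriv (fun s => φ s x) t + dot3 (u t x) (grad3 (φ t) x) = 0 := by
  intro t ht x
  have hq : (t, x) ∈ I ×ˢ (Set.univ : Set V3) := ⟨ht, Set.mem_univ x⟩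
  -- vorticity components on U
  have hv0 : ∀ q' ∈ I ×ˢ (Set.univ : Set V3),
      fderiv ℝ (Fc u 2) q' (e3 1) - fderiv ℝ (Fc u 1) q' (e3 2)
        = φ q'.1 q'.2 * K q'.2 0 := fun q' h => (flat_vort hIopen hu hvort q' h).1
  have hv1 : ∀ q' ∈ I ×ˢ (Set.univ : Set V3),
      fderiv ℝ (Fc u 0) q' (e3 2) - fderiv ℝ (Fc u 2) q' (e3 0)
        = φ q'.1 q'.2 * K q'.2 1 := fun q' h => (flat_vort hIopen hu hvort q' h).2.1
  have hv2 : ∀ q' ∈ I ×ˢ (Set.univ : Set V3),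
      fderiv ℝ (Fc u 1) q' (e3 0) - fderiv ℝ (Fc u 0) q' (e3 1)
        = φ q'.1 q'.2 * K q'.2 2 := fun q' h => (flat_vort hIopen hu hvort q' h).2.2
  -- differentiated vorticity relations
  have hW0 := diff_vort hIopen hu hKsmooth hφ hq 1 2 0 hv0
  have hW1 := diff_vort hIopen hu hKsmooth hφ hq 2 0 1 hv1
  have hW2 := diff_vort hIopen hu hKsmooth hφ hq 0 1 2 hv2
  -- differentiated momentum
  have hS := fun (k : Fin 3) (v : ℝ × V3) => diff_momentum hIopen hu hp heuler hq k v
  -- Schwarz symmetries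
  have hFk : ∀ k : Fin 3, ContDiffAt ℝ (⊤:ℕ∞) (Fc u k) (t, x) :=
    fun k => piecewise_smooth hIopen hu hq k
  have hbsym : ∀ (k : Fin 3) (vv ww : ℝ × V3),
      fderiv ℝ (fun q' => fderiv ℝ (Fc u k) q' vv) (t,x) ww
        = fderiv ℝ (fun q' => fderiv ℝ (Fc u k) q' ww) (t,x) vv :=
    fun k vv ww => dd_comm _ _ (hFk k) vv ww
  have hPsym : ∀ (vv ww : ℝ × V3),
      fderiv ℝ (fun q' => fderiv ℝ (Pc p) q' vv) (t,x) ww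
        = fderiv ℝ (fun q' => fderiv ℝ (Pc p) q' ww) (t,x) vv :=
    fun vv ww => dd_comm _ _ (pres_smooth hIopen hp hq) vv ww
  -- divergence at the point
  have hdv := flat_div hIopen hu heuler hq
  -- axisymmetry at the point, expanded
  have hax : ∀ m : Fin 3,
      K x 0 * fderiv ℝ (Fc u m) (t,x) (e3 0)
      + K x 1 * fderiv ℝ (Fc u m) (t,x) (e3 1)
      + K x 2 * fderiv ℝ (Fc u m) (t,x) (e3 2)
      = Fc u 0 (t,x) * fderiv ℝ (fun q : ℝ × V3 => K q.2 m) (t,x) (e3 0)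
      + Fc u 1 (t,x) * fderiv ℝ (fun q : ℝ × V3 => K q.2 m) (t,x) (e3 1)
      + Fc u 2 (t,x) * fderiv ℝ (fun q : ℝ × V3 => K q.2 m) (t,x) (e3 2) := by
    intro m
    have h := flat_axi hIopen hu hKsmooth haxi hq m
    rw [Fin.sum_univ_three, Fin.sum_univ_three] at h
    linarith
  have hket := fun (m : Fin 3) => kap_et hKsmooth m t x
  -- vorticity values at the point
  have hv0q := hv0 (t,x) hq
  have hv1q := hv1 (t,x) hq
  have hv2q := hv2 (t,x) hq
  dsimp only at hv0q hv1q hv2q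
  -- goal reduction
  have hΦd : DifferentiableAt ℝ (Pc φ) (t,x) :=
    (pres_smooth hIopen hφ hq).differentiableAt cast1
  have hφt : deriv (fun s => φ s x) t = fderiv ℝ (Pc φ) (t,x) et3 :=
    deriv_slice_t (Pc φ) t x hΦd
  have hgi : ∀ i : Fin 3, grad3 (φ t) x i = fderiv ℝ (Pc φ) (t,x) (e3 i) :=
    fun i => fderiv_slice_x (Pc φ) t x hΦd (Pi.single i 1)
  have hdot : dot3 (u t x) (grad3 (φ t) x)
      = Fc u 0 (t,x) * fderiv ℝ (Pc φ) (t,x) (e3 0)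
      + Fc u 1 (t,x) * fderiv ℝ (Pc φ) (t,x) (e3 1)
      + Fc u 2 (t,x) * fderiv ℝ (Pc φ) (t,x) (e3 2) := by
    rw [dot3, Fin.sum_univ_three, hgi 0, hgi 1, hgi 2]
    rfl
  rw [hφt, hdot]
  -- the transported quantity annihilates K x
  have hm0 : (fderiv ℝ (Pc φ) (t,x) et3
      + (Fc u 0 (t,x) * fderiv ℝ (Pc φ) (t,x) (e3 0)
      + Fc u 1 (t,x) * fderiv ℝ (Pc φ) (t,x) (e3 1)
      + Fc u 2 (t,x) * fderiv ℝ (Pc φ) (t,x) (e3 2))) * K x 0 = 0 := by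
    linear_combination
        hS 2 (e3 1) - hS 1 (e3 2)
        - hbsym 2 et3 (e3 1) + hbsym 1 et3 (e3 2)
        - Fc u 0 (t,x) * hbsym 2 (e3 0) (e3 1) + Fc u 0 (t,x) * hbsym 1 (e3 0) (e3 2)
        + Fc u 1 (t,x) * hbsym 1 (e3 1) (e3 2) - Fc u 2 (t,x) * hbsym 2 (e3 2) (e3 1)
        - hPsym (e3 2) (e3 1)
        - hW0 et3 - (φ t x) * hket 0
        - Fc u 0 (t,x) * hW0 (e3 0) - Fc u 1 (t,x) * hW0 (e3 1)
        - Fc u 2 (t,x) * hW0 (e3 2)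
        + fderiv ℝ (Fc u 0) (t,x) (e3 0) * hv0q
        + fderiv ℝ (Fc u 0) (t,x) (e3 1) * hv1q
        + fderiv ℝ (Fc u 0) (t,x) (e3 2) * hv2q
        - (fderiv ℝ (Fc u 0) (t,x) (e3 0) + fderiv ℝ (Fc u 1) (t,x) (e3 1)
            + fderiv ℝ (Fc u 2) (t,x) (e3 2)) * hv0q
        - (φ t x * K x 0) * hdv
        + (φ t x) * hax 0
  have hm1 : (fderiv ℝ (Pc φ) (t,x) et3
      + (Fc u 0 (t,x) * fderiv ℝ (Pc φ) (t,x) (e3 0)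
      + Fc u 1 (t,x) * fderiv ℝ (Pc φ) (t,x) (e3 1)
      + Fc u 2 (t,x) * fderiv ℝ (Pc φ) (t,x) (e3 2))) * K x 1 = 0 := by
    linear_combination
        hS 0 (e3 2) - hS 2 (e3 0)
        - hbsym 0 et3 (e3 2) + hbsym 2 et3 (e3 0)
        - Fc u 1 (t,x) * hbsym 0 (e3 1) (e3 2) + Fc u 1 (t,x) * hbsym 2 (e3 1) (e3 0)
        + Fc u 2 (t,x) * hbsym 2 (e3 2) (e3 0) - Fc u 0 (t,x) * hbsym 0 (e3 0) (e3 2)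
        - hPsym (e3 0) (e3 2)
        - hW1 et3 - (φ t x) * hket 1
        - Fc u 0 (t,x) * hW1 (e3 0) - Fc u 1 (t,x) * hW1 (e3 1)
        - Fc u 2 (t,x) * hW1 (e3 2)
        + fderiv ℝ (Fc u 1) (t,x) (e3 0) * hv0q
        + fderiv ℝ (Fc u 1) (t,x) (e3 1) * hv1q
        + fderiv ℝ (Fc u 1) (t,x) (e3 2) * hv2q
        - (fderiv ℝ (Fc u 0) (t,x) (e3 0) + fderiv ℝ (Fc u 1) (t,x) (e3 1)
            + fderiv ℝ (Fc u 2) (t,x) (e3 2)) * hv1q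
        - (φ t x * K x 1) * hdv
        + (φ t x) * hax 1
  have hm2 : (fderiv ℝ (Pc φ) (t,x) et3
      + (Fc u 0 (t,x) * fderiv ℝ (Pc φ) (t,x) (e3 0)
      + Fc u 1 (t,x) * fderiv ℝ (Pc φ) (t,x) (e3 1)
      + Fc u 2 (t,x) * fderiv ℝ (Pc φ) (t,x) (e3 2))) * K x 2 = 0 := by
    linear_combination
        hS 1 (e3 0) - hS 0 (e3 1)
        - hbsym 1 et3 (e3 0) + hbsym 0 et3 (e3 1)
        - Fc u 2 (t,x) * hbsym 1 (e3 2) (e3 0) + Fc u 2 (t,x) * hbsym 0 (e3 2) (e3 1)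
        + Fc u 0 (t,x) * hbsym 0 (e3 0) (e3 1) - Fc u 1 (t,x) * hbsym 1 (e3 1) (e3 0)
        - hPsym (e3 1) (e3 0)
        - hW2 et3 - (φ t x) * hket 2
        - Fc u 0 (t,x) * hW2 (e3 0) - Fc u 1 (t,x) * hW2 (e3 1)
        - Fc u 2 (t,x) * hW2 (e3 2)
        + fderiv ℝ (Fc u 2) (t,x) (e3 0) * hv0q
        + fderiv ℝ (Fc u 2) (t,x) (e3 1) * hv1q
        + fderiv ℝ (Fc u 2) (t,x) (e3 2) * hv2q
        - (fderiv ℝ (Fc u 0) (t,x) (e3 0) + fderiv ℝ (Fc u 1) (t,x) (e3 1)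
            + fderiv ℝ (Fc u 2) (t,x) (e3 2)) * hv2q
        - (φ t x * K x 2) * hdv
        + (φ t x) * hax 2
  -- K x is nonzero somewhere
  obtain ⟨k0, hk0⟩ : ∃ i, K x i ≠ 0 := by
    by_contra h
    push_neg at h
    exact hKne x (funext fun i => h i)
  have hψ : (fderiv ℝ (Pc φ) (t,x) et3
      + (Fc u 0 (t,x) * fderiv ℝ (Pc φ) (t,x) (e3 0)
      + Fc u 1 (t,x) * fderiv ℝ (Pc φ) (t,x) (e3 1)
      + Fc u 2 (t,x) * fderiv ℝ (Pc φ) (t,x) (e3 2))) = 0 := by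
    fin_cases k0
    · exact (mul_eq_zero.mp hm0).resolve_right hk0
    · exact (mul_eq_zero.mp hm1).resolve_right hk0
    · exact (mul_eq_zero.mp hm2).resolve_right hk0
  linarith
end
end

section
/- Let K be a nowhere-vanishing Killing field on an open set U ⊆ ℝ³. Then curl(K/|K|²) is everywhere parallel to K: (curl(K/|K|²))(x) × K(x) = 0 for all x ∈ U. -/
noncomputable section

/-- Auxiliary: the partial derivatives of K/|K|² at a point. -/
lemma pd_formula_aux (U : Set V3) (hU : IsOpen U)
    (K : V3 → V3) (hKsmooth : ContDiffOn ℝ (⊤ : ℕ∞) K U)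
    (x : V3) (hx : x ∈ U) (hg : dot3 (K x) (K x) ≠ 0) (i j : Fin 3) :
    pd i (fun y => (dot3 (K y) (K y))⁻¹ • K y j) x =
      -((dot3 (K x) (K x))^2)⁻¹ * (2 * ∑ m, K x m * fderiv ℝ K x (Pi.single i 1) m) * K x j
        + (dot3 (K x) (K x))⁻¹ * fderiv ℝ K x (Pi.single i 1) j := by
  have hKd : DifferentiableAt ℝ K x :=
    (hKsmooth.contDiffAt (hU.mem_nhds hx)).differentiableAt (by simp)
  set A := fderiv ℝ K x with hA
  have hAd : HasFDerivAt K A x := hKd.hasFDerivAt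
  have hcomp : ∀ m : Fin 3, HasFDerivAt (fun y => K y m)
      ((ContinuousLinearMap.proj m).comp A) x :=
    fun m => (ContinuousLinearMap.proj m : V3 →L[ℝ] ℝ).hasFDerivAt.comp x hAd
  have hG : HasFDerivAt (fun y => dot3 (K y) (K y))
      (∑ m : Fin 3, (K x m • (ContinuousLinearMap.proj m).comp A
        + K x m • (ContinuousLinearMap.proj m).comp A)) x := by
    simpa [dot3] using HasFDerivAt.fun_sum (fun m _ => (hcomp m).fun_mul (hcomp m))
  have hinv : HasFDerivAt (fun y => (dot3 (K y) (K y))⁻¹)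
      ((-((dot3 (K x) (K x))^2)⁻¹) • (∑ m : Fin 3, (K x m • (ContinuousLinearMap.proj m).comp A
        + K x m • (ContinuousLinearMap.proj m).comp A))) x :=
    (hasDerivAt_inv hg).comp_hasFDerivAt x hG
  have hprod := hinv.fun_mul (hcomp j)
  simp only [pd, smul_eq_mul]
  rw [hprod.fderiv]
  simp [ContinuousLinearMap.sum_apply, mul_comm, mul_assoc, mul_left_comm, Finset.mul_sum,
    two_mul, mul_add, add_mul, Finset.sum_add_distrib]
  ring

/-- for a nowhere-vanishing Killing field K on an open set U ⊆ ℝ³,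
curl(K/|K|²) is everywhere parallel to K: (curl(K/|K|²)) × K = 0 on U. -/
theorem curl_of_K_over_normsq_parallel (U : Set V3) (hU : IsOpen U)
    (K : V3 → V3) (hKsmooth : ContDiffOn ℝ (⊤ : ℕ∞) K U)
    (hKill : IsKillingOn K U) (hKne : ∀ x ∈ U, K x ≠ 0) :
    ∀ x ∈ U,
      cross3 (curl3 (fun y => (dot3 (K y) (K y))⁻¹ • K y) x) (K x) = 0 := by
  intro x hx
  have hg : dot3 (K x) (K x) ≠ 0 := by
    have h : ¬ ∀ m, K x m = 0 := fun h => hKne x hx (funext h)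
    push_neg at h
    obtain ⟨m, hm⟩ := h
    have : 0 < dot3 (K x) (K x) := by
      rw [dot3]
      exact Finset.sum_pos' (fun n _ => mul_self_nonneg _)
        ⟨m, Finset.mem_univ m, mul_self_pos.mpr hm⟩
    exact this.ne'
  have hpd := pd_formula_aux U hU K hKsmooth x hx hg
  have hanti : ∀ p q : Fin 3,
      fderiv ℝ K x (Pi.single p 1) q = -(fderiv ℝ K x (Pi.single q 1) p) := by
    intro p q
    have h := hKill x hx (Pi.single p 1) (Pi.single q 1)
    simp [dot3, Pi.single_apply, Finset.mul_sum, mul_ite] at h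
    linarith
  have hdiag : ∀ p : Fin 3, fderiv ℝ K x (Pi.single p 1) p = 0 := by
    intro p; have := hanti p p; linarith
  funext r
  have hcurl : ∀ a b : Fin 3,
      pd a (fun y => ((dot3 (K y) (K y))⁻¹ • K y) b) x =
        -((dot3 (K x) (K x))^2)⁻¹ * (2 * ∑ m, K x m * fderiv ℝ K x (Pi.single a 1) m) * K x b
          + (dot3 (K x) (K x))⁻¹ * fderiv ℝ K x (Pi.single a 1) b := fun a b => hpd a b
  have hgs : dot3 (K x) (K x) = K x 0 * K x 0 + K x 1 * K x 1 + K x 2 * K x 2 := by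
    rw [dot3, Fin.sum_univ_three]
  rw [hgs] at hcurl hg
  fin_cases r <;>
    simp only [cross3, curl3, hcurl, Fin.sum_univ_three, Pi.zero_apply,
      Matrix.cons_val_zero, Matrix.cons_val_one, Matrix.head_cons, Matrix.cons_val_two,
      Matrix.tail_cons, Fin.isValue, Fin.reduceFinMk] <;>
    rw [hanti 1 0, hanti 2 0, hanti 2 1, hdiag 0, hdiag 1, hdiag 2] <;>
    field_simp <;>
    ring
end
end

section
/- Let K be a nowhere-vanishing Killing field on an open set U ⊆ ℝ³. Then curl K = φ K − ∇⊥(|K|²) on U, where φ = ⟨curl K, K⟩/|K|² and ∇⊥h = (K × ∇h)/|K|². -/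
noncomputable section

/-- Skew gradient ∇⊥h = (K × ∇h)/|K|². -/
def skewGrad (K : V3 → V3) (h : V3 → ℝ) (x : V3) : V3 :=
  (dot3 (K x) (K x))⁻¹ • cross3 (K x) (grad3 h x)

/-- Poisson bracket {f,g} = ⟨∇⊥f, ∇g⟩. -/
def pbracket (K : V3 → V3) (f g : V3 → ℝ) (x : V3) : ℝ :=
  dot3 (skewGrad K f x) (grad3 g x)

/-- The K-Laplacian Δ_K f = div(∇f/|K|²). -/
def lapK (K : V3 → V3) (f : V3 → ℝ) (x : V3) : ℝ :=
  div3 (fun y => (dot3 (K y) (K y))⁻¹ • grad3 f y) x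

/-- φ = ⟨curl K, K⟩/|K|². -/
def phiK (K : V3 → V3) (x : V3) : ℝ := dot3 (curl3 K x) (K x) / dot3 (K x) (K x)

/-- for a nowhere-vanishing Killing field K on an open set U ⊆ ℝ³,
curl K = φ K − ∇⊥(|K|²), where φ = ⟨curl K, K⟩/|K|² and ∇⊥h = (K × ∇h)/|K|². -/
theorem curl_K_decomposition (U : Set V3) (hU : IsOpen U)
    (K : V3 → V3) (hKsmooth : ContDiffOn ℝ (⊤ : ℕ∞) K U)
    (hKill : IsKillingOn K U) (hKne : ∀ x ∈ U, K x ≠ 0) :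
    ∀ x ∈ U,
      curl3 K x = phiK K x • K x - skewGrad K (fun y => dot3 (K y) (K y)) x := by
  intro x hx
  have hKd : DifferentiableAt ℝ K x :=
    (hKsmooth.contDiffAt (hU.mem_nhds hx)).differentiableAt (by simp)
  have hKF : HasFDerivAt K (fderiv ℝ K x) x := hKd.hasFDerivAt
  set A := fderiv ℝ K x with hAdef
  have hcomp : ∀ j : Fin 3, HasFDerivAt (fun y => K y j)
      ((ContinuousLinearMap.proj j).comp A) x := by
    intro j
    have h := ((ContinuousLinearMap.proj j : V3 →L[ℝ] ℝ)).hasFDerivAt.comp x hKF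
    exact h
  have hpd : ∀ i j : Fin 3, pd i (fun y => K y j) x = A (Pi.single i 1) j := by
    intro i j
    rw [pd, (hcomp j).fderiv]
    rfl
  have hh : ∀ i : Fin 3, pd i (fun y => dot3 (K y) (K y)) x
      = ∑ j : Fin 3, (K x j * A (Pi.single i 1) j + K x j * A (Pi.single i 1) j) := by
    intro i
    have hD : HasFDerivAt (fun y => dot3 (K y) (K y))
        (∑ j : Fin 3, (K x j • ((ContinuousLinearMap.proj j).comp A) +
                       K x j • ((ContinuousLinearMap.proj j).comp A))) x := by
      have he : (fun y => dot3 (K y) (K y)) = fun y => ∑ j : Fin 3, K y j * K y j := rfl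
      rw [he]
      exact HasFDerivAt.fun_sum (fun j _ => (hcomp j).fun_mul (hcomp j))
    rw [pd, hD.fderiv]
    simp [ContinuousLinearMap.sum_apply, ContinuousLinearMap.add_apply,
      ContinuousLinearMap.smul_apply, ContinuousLinearMap.comp_apply,
      ContinuousLinearMap.proj_apply, smul_eq_mul]
  have hds1 : ∀ (u : V3) (j : Fin 3), dot3 u (Pi.single j 1) = u j := by
    intro u j
    simp [dot3, Pi.single_apply]
  have hds2 : ∀ (u : V3) (i : Fin 3), dot3 (Pi.single i 1) u = u i := by
    intro u i
    simp [dot3, Pi.single_apply]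
  have hanti : ∀ i j : Fin 3, A (Pi.single j 1) i = - A (Pi.single i 1) j := by
    intro i j
    have h := hKill x hx (Pi.single i 1) (Pi.single j 1)
    rw [hds1, hds2] at h
    linarith
  have hdiag : ∀ i : Fin 3, A (Pi.single i 1) i = 0 := by
    intro i
    have := hanti i i
    linarith
  have hKx := hKne x hx
  have hs' : K x 0 * K x 0 + K x 1 * K x 1 + K x 2 * K x 2 ≠ 0 := by
    intro hzero
    apply hKx
    have h0 := mul_self_nonneg (K x 0)
    have h1 := mul_self_nonneg (K x 1)
    have h2 := mul_self_nonneg (K x 2)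
    have e0 : K x 0 = 0 := mul_self_eq_zero.mp (by linarith)
    have e1 : K x 1 = 0 := mul_self_eq_zero.mp (by linarith)
    have e2 : K x 2 = 0 := mul_self_eq_zero.mp (by linarith)
    funext j
    fin_cases j <;> simpa using ‹_›
  have hfin2 : (⟨2, by norm_num⟩ : Fin 3) = 2 := rfl
  have hfin1 : (⟨1, by norm_num⟩ : Fin 3) = 1 := rfl
  have hfin0 : (⟨0, by norm_num⟩ : Fin 3) = 0 := rfl
  have hS : K x 0 ^ 2 + K x 1 ^ 2 + K x 2 ^ 2 ≠ 0 := by simpa [sq] using hs'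
  have hS1 : K x 1 ^ 2 + K x 0 ^ 2 + K x 2 ^ 2 ≠ 0 := by
    convert hs' using 1; ring
  have hS2 : K x 2 ^ 2 + K x 0 ^ 2 + K x 1 ^ 2 ≠ 0 := by
    convert hs' using 1; ring
  funext i
  fin_cases i <;>
  · simp only [curl3, skewGrad, phiK, grad3, cross3, Pi.smul_apply, Pi.sub_apply,
      smul_eq_mul, hpd, hh, hfin0, hfin1, hfin2, Matrix.cons_val_zero, Matrix.cons_val_one,
      Matrix.head_cons, Matrix.cons_val_two, Matrix.tail_cons]
    simp only [dot3, Fin.sum_univ_three, Matrix.cons_val_zero, Matrix.cons_val_one,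
      Matrix.head_cons, Matrix.cons_val_two, Matrix.tail_cons]
    simp only [hanti 0 1, hanti 0 2, hanti 1 2, hdiag 0, hdiag 1, hdiag 2]
    field_simp
    ring
end
end

section
/- Let K be a nowhere-vanishing Killing field on an open set U ⊆ ℝ³ and let f, g : U → ℝ be smooth functions with ⟨K, ∇f⟩ = 0 and ⟨K, ∇g⟩ = 0 on U. Then div(∇⊥f) = 0 and div(gK) = 0 on U. -/
noncomputable section

lemma dot3_single_right (u : V3) (j : Fin 3) : dot3 u (Pi.single j 1) = u j := by
  fin_cases j <;> simp [dot3, Fin.sum_univ_three]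

lemma dot3_single_left (u : V3) (j : Fin 3) : dot3 (Pi.single j 1) u = u j := by
  fin_cases j <;> simp [dot3, Fin.sum_univ_three]

lemma pd_component (X : V3 → V3) (x : V3)
    (h : ∀ i, DifferentiableAt ℝ (fun y => X y i) x) (j i : Fin 3) :
    fderiv ℝ X x (Pi.single j 1) i = pd j (fun y => X y i) x := by
  have hX : fderiv ℝ X x = ContinuousLinearMap.pi (fun i => fderiv ℝ (fun y => X y i) x) :=
    fderiv_pi h
  rw [hX]; rfl

lemma div3_eq_sum_pd (X : V3 → V3) (x : V3)
    (h : ∀ i, DifferentiableAt ℝ (fun y => X y i) x) :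
    div3 X x = ∑ j, pd j (fun y => X y j) x := by
  unfold div3
  exact Finset.sum_congr rfl fun j _ => pd_component X x h j j

lemma pd_mul (A B : V3 → ℝ) (x : V3) (hA : DifferentiableAt ℝ A x)
    (hB : DifferentiableAt ℝ B x) (j : Fin 3) :
    pd j (fun y => A y * B y) x = pd j A x * B x + A x * pd j B x := by
  unfold pd; rw [fderiv_fun_mul hA hB]; simp; ring

lemma pd_sub (A B : V3 → ℝ) (x : V3) (hA : DifferentiableAt ℝ A x)
    (hB : DifferentiableAt ℝ B x) (j : Fin 3) :
    pd j (fun y => A y - B y) x = pd j A x - pd j B x := by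
  unfold pd; rw [fderiv_fun_sub hA hB]; simp

lemma pd_add (A B : V3 → ℝ) (x : V3) (hA : DifferentiableAt ℝ A x)
    (hB : DifferentiableAt ℝ B x) (j : Fin 3) :
    pd j (fun y => A y + B y) x = pd j A x + pd j B x := by
  unfold pd; rw [fderiv_fun_add hA hB]; simp

lemma pd_inv (A : V3 → ℝ) (x : V3) (hA : DifferentiableAt ℝ A x) (h0 : A x ≠ 0) (j : Fin 3) :
    pd j (fun y => (A y)⁻¹) x = -((A x)^2)⁻¹ * pd j A x := by
  unfold pd
  rw [show (fun y => (A y)⁻¹) = (fun t : ℝ => t⁻¹) ∘ A from rfl,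
    fderiv_comp x (differentiableAt_inv h0) hA]
  simp [fderiv_inv]; ring

lemma dot3_pos_ne (v : V3) (hv : v ≠ 0) : dot3 v v ≠ 0 := by
  have h1 : ∃ i, v i ≠ 0 := by
    by_contra h; push_neg at h; exact hv (funext h)
  obtain ⟨i, hi⟩ := h1
  have : 0 < dot3 v v :=
    Finset.sum_pos' (fun i _ => mul_self_nonneg _) ⟨i, Finset.mem_univ i, mul_self_pos.mpr hi⟩
  linarith

/-- for a nowhere-vanishing Killing field K on an open set U and smooth
functions f, g with K(f) = K(g) = 0, one has div(∇⊥f) = 0 and div(gK) = 0 on U. -/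
theorem div_skewGrad_and_div_gK (U : Set V3) (hU : IsOpen U)
    (K : V3 → V3) (hKsmooth : ContDiffOn ℝ (⊤ : ℕ∞) K U)
    (hKill : IsKillingOn K U) (hKne : ∀ x ∈ U, K x ≠ 0)
    (f g : V3 → ℝ)
    (hf : ContDiffOn ℝ (⊤ : ℕ∞) f U) (hg : ContDiffOn ℝ (⊤ : ℕ∞) g U)
    (hKf : ∀ x ∈ U, dot3 (K x) (grad3 f x) = 0)
    (hKg : ∀ x ∈ U, dot3 (K x) (grad3 g x) = 0) :
    ∀ x ∈ U,
      div3 (skewGrad K f) x = 0 ∧ div3 (fun y => g y • K y) x = 0 := by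
  intro x hx
  have hmem : U ∈ nhds x := hU.mem_nhds hx
  have hfx : ContDiffAt ℝ (⊤ : ℕ∞) f x := hf.contDiffAt hmem
  have hgx : ContDiffAt ℝ (⊤ : ℕ∞) g x := hg.contDiffAt hmem
  have hKx : ContDiffAt ℝ (⊤ : ℕ∞) K x := hKsmooth.contDiffAt hmem
  have hKdiff : DifferentiableAt ℝ K x := hKx.differentiableAt (by simp)
  have hKi : ∀ i, DifferentiableAt ℝ (fun y => K y i) x := differentiableAt_pi.mp hKdiff
  have hgd : DifferentiableAt ℝ g x := hgx.differentiableAt (by simp)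
  -- second derivatives of f
  have hdfc : ContDiffAt ℝ 1 (fderiv ℝ f) x := hfx.fderiv_right (WithTop.coe_le_coe.mpr (le_top : (1+1:ℕ∞) ≤ ⊤))
  have hdfd : DifferentiableAt ℝ (fderiv ℝ f) x := hdfc.differentiableAt one_ne_zero
  have hpdf : ∀ i, DifferentiableAt ℝ (pd i f) x := fun i =>
    hdfd.clm_apply (differentiableAt_const _)
  have hpdpd : ∀ i j : Fin 3,
      pd j (pd i f) x = fderiv ℝ (fderiv ℝ f) x (Pi.single j 1) (Pi.single i 1) := by
    intro i j
    unfold pd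
    rw [fderiv_clm_apply hdfd (differentiableAt_const _)]
    simp
  have hsymf : ∀ i j : Fin 3, pd j (pd i f) x = pd i (pd j f) x := by
    intro i j
    rw [hpdpd, hpdpd]
    exact (hfx.isSymmSndFDerivAt (by simp only [minSmoothness_of_isRCLikeNormedField]; exact WithTop.coe_le_coe.mpr le_top)).eq _ _
  -- K derivative matrix
  have hKcomp : ∀ i j : Fin 3,
      pd j (fun y => K y i) x = fderiv ℝ K x (Pi.single j 1) i := fun i j =>
    (pd_component K x hKi j i).symm
  have hanti : ∀ i j : Fin 3,
      fderiv ℝ K x (Pi.single i 1) j + fderiv ℝ K x (Pi.single j 1) i = 0 := by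
    intro i j
    have := hKill x hx (Pi.single i 1) (Pi.single j 1)
    rwa [dot3_single_right, dot3_single_left] at this
  have horthf : K x 0 * pd 0 f x + K x 1 * pd 1 f x + K x 2 * pd 2 f x = 0 := by
    have := hKf x hx
    simpa [dot3, grad3, Fin.sum_univ_three] using this
  have horthg : K x 0 * pd 0 g x + K x 1 * pd 1 g x + K x 2 * pd 2 g x = 0 := by
    have := hKg x hx
    simpa [dot3, grad3, Fin.sum_univ_three] using this
  constructor
  · -- div (skewGrad f) = 0
    have hs0 : dot3 (K x) (K x) ≠ 0 := dot3_pos_ne _ (hKne x hx)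
    have hSeq : (fun y => dot3 (K y) (K y)) =
        fun y => K y 0 * K y 0 + K y 1 * K y 1 + K y 2 * K y 2 := by
      funext y; simp [dot3, Fin.sum_univ_three]
    have hSdiff : DifferentiableAt ℝ (fun y => dot3 (K y) (K y)) x := by
      rw [hSeq]
      exact (((hKi 0).mul (hKi 0)).add ((hKi 1).mul (hKi 1))).add ((hKi 2).mul (hKi 2))
    have hpdS : ∀ j : Fin 3, pd j (fun y => dot3 (K y) (K y)) x
        = (fderiv ℝ K x (Pi.single j 1) 0 * K x 0 + K x 0 * fderiv ℝ K x (Pi.single j 1) 0)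
          + (fderiv ℝ K x (Pi.single j 1) 1 * K x 1 + K x 1 * fderiv ℝ K x (Pi.single j 1) 1)
          + (fderiv ℝ K x (Pi.single j 1) 2 * K x 2 + K x 2 * fderiv ℝ K x (Pi.single j 1) 2)
        := by
      intro j
      rw [hSeq,
        pd_add _ _ _ (((hKi 0).fun_mul (hKi 0)).fun_add ((hKi 1).fun_mul (hKi 1))) ((hKi 2).fun_mul (hKi 2)),
        pd_add _ _ _ ((hKi 0).fun_mul (hKi 0)) ((hKi 1).fun_mul (hKi 1)),
        pd_mul _ _ _ (hKi 0) (hKi 0), pd_mul _ _ _ (hKi 1) (hKi 1),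
        pd_mul _ _ _ (hKi 2) (hKi 2)]
      simp only [hKcomp]
    have hSinvd : DifferentiableAt ℝ (fun y => (dot3 (K y) (K y))⁻¹) x := hSdiff.inv hs0
    have hE0 : (fun y => skewGrad K f y 0)
        = fun y => (dot3 (K y) (K y))⁻¹ * (K y 1 * pd 2 f y - K y 2 * pd 1 f y) := by
      funext y; simp [skewGrad, cross3, grad3]
    have hE1 : (fun y => skewGrad K f y 1)
        = fun y => (dot3 (K y) (K y))⁻¹ * (K y 2 * pd 0 f y - K y 0 * pd 2 f y) := by
      funext y; simp [skewGrad, cross3, grad3]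
    have hE2 : (fun y => skewGrad K f y 2)
        = fun y => (dot3 (K y) (K y))⁻¹ * (K y 0 * pd 1 f y - K y 1 * pd 0 f y) := by
      funext y; simp [skewGrad, cross3, grad3]
    have hC0 : DifferentiableAt ℝ (fun y => K y 1 * pd 2 f y - K y 2 * pd 1 f y) x :=
      ((hKi 1).mul (hpdf 2)).sub ((hKi 2).mul (hpdf 1))
    have hC1 : DifferentiableAt ℝ (fun y => K y 2 * pd 0 f y - K y 0 * pd 2 f y) x :=
      ((hKi 2).mul (hpdf 0)).sub ((hKi 0).mul (hpdf 2))
    have hC2 : DifferentiableAt ℝ (fun y => K y 0 * pd 1 f y - K y 1 * pd 0 f y) x :=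
      ((hKi 0).mul (hpdf 1)).sub ((hKi 1).mul (hpdf 0))
    have hskd : ∀ i, DifferentiableAt ℝ (fun y => skewGrad K f y i) x := by
      intro i
      fin_cases i
      · show DifferentiableAt ℝ (fun y => skewGrad K f y 0) x
        rw [hE0]; exact hSinvd.mul hC0
      · show DifferentiableAt ℝ (fun y => skewGrad K f y 1) x
        rw [hE1]; exact hSinvd.mul hC1
      · show DifferentiableAt ℝ (fun y => skewGrad K f y 2) x
        rw [hE2]; exact hSinvd.mul hC2
    rw [div3_eq_sum_pd _ _ hskd, Fin.sum_univ_three, hE0, hE1, hE2,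
      pd_mul _ _ _ hSinvd hC0, pd_mul _ _ _ hSinvd hC1, pd_mul _ _ _ hSinvd hC2,
      pd_sub _ _ _ ((hKi 1).fun_mul (hpdf 2)) ((hKi 2).fun_mul (hpdf 1)),
      pd_sub _ _ _ ((hKi 2).fun_mul (hpdf 0)) ((hKi 0).fun_mul (hpdf 2)),
      pd_sub _ _ _ ((hKi 0).fun_mul (hpdf 1)) ((hKi 1).fun_mul (hpdf 0)),
      pd_mul _ _ _ (hKi 1) (hpdf 2), pd_mul _ _ _ (hKi 2) (hpdf 1),
      pd_mul _ _ _ (hKi 2) (hpdf 0), pd_mul _ _ _ (hKi 0) (hpdf 2),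
      pd_mul _ _ _ (hKi 0) (hpdf 1), pd_mul _ _ _ (hKi 1) (hpdf 0)]
    simp only [pd_inv _ _ hSdiff hs0, hpdS, hKcomp]
    have a00 : fderiv ℝ K x (Pi.single 0 1) 0 = 0 := by have := hanti 0 0; linarith
    have a11 : fderiv ℝ K x (Pi.single 1 1) 1 = 0 := by have := hanti 1 1; linarith
    have a22 : fderiv ℝ K x (Pi.single 2 1) 2 = 0 := by have := hanti 2 2; linarith
    have a01 : fderiv ℝ K x (Pi.single 0 1) 1 = -fderiv ℝ K x (Pi.single 1 1) 0 := by
      have := hanti 0 1; linarith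
    have a02 : fderiv ℝ K x (Pi.single 0 1) 2 = -fderiv ℝ K x (Pi.single 2 1) 0 := by
      have := hanti 0 2; linarith
    have a12 : fderiv ℝ K x (Pi.single 1 1) 2 = -fderiv ℝ K x (Pi.single 2 1) 1 := by
      have := hanti 1 2; linarith
    rw [a00, a11, a22, a01, a02, a12, hsymf 1 0, hsymf 2 0, hsymf 2 1]
    have hsv : dot3 (K x) (K x) = K x 0 * K x 0 + K x 1 * K x 1 + K x 2 * K x 2 := by
      simp [dot3, Fin.sum_univ_three]
    rw [hsv] at hs0 ⊢
    set s := K x 0 * K x 0 + K x 1 * K x 1 + K x 2 * K x 2 with hs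
    field_simp
    rw [hs]
    linear_combination ((1) * (-2 * fderiv ℝ K x (Pi.single 2 1) 1 * K x 0
      + 2 * fderiv ℝ K x (Pi.single 2 1) 0 * K x 1
      - 2 * fderiv ℝ K x (Pi.single 1 1) 0 * K x 2)) * horthf
  · -- div (g K) = 0
    have hcomp : ∀ i, DifferentiableAt ℝ (fun y => (g y • K y) i) x := fun i =>
      hgd.mul (hKi i)
    have epd : ∀ j : Fin 3, pd j (fun y => (g y • K y) j) x
        = pd j g x * K x j + g x * fderiv ℝ K x (Pi.single j 1) j := by
      intro j
      have : (fun y => (g y • K y) j) = fun y => g y * K y j := rfl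
      rw [this, pd_mul _ _ _ hgd (hKi j), hKcomp]
    rw [div3_eq_sum_pd _ _ hcomp, Fin.sum_univ_three, epd 0, epd 1, epd 2]
    have d0 := hanti 0 0
    have d1 := hanti 1 1
    have d2 := hanti 2 2
    linear_combination horthg + g x / 2 * d0 + g x / 2 * d1 + g x / 2 * d2
end
end
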